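/- arXiv:2309.12473 — 3 statements merged into one kernel-verified Lean document; each statement's English description precedes it below -/
import Mathlib

section
/- Assuming that every finite 4-connected graph with at least f_4(k) vertices contains D_k, O_k, M_k or K_{4,k} as a minor, it follows that every finite 3-connected graph with at least f_4(k+1) − 1 vertices contains the wheel W_k or K_{3,k} as a minor. -/
open SimpleGraph

/-- `G` contains a path with `n` edges. -/
def HasPathLen {V : Type*} (G : SimpleGraph V) (n : ℕ) : Prop :=
  ∃ (u v : V) (p : G.Walk u v), p.IsPath ∧ p.length = n

/-- `B` is a model of `H` inside `G`. -/
def IsModelOf {V W : Type*} (G : SimpleGraph V) (H : SimpleGraph W) (B : W → Set V) : Prop :=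
  (∀ w, (B w).Nonempty) ∧ (∀ w, (G.induce (B w)).Connected) ∧
  (Pairwise fun w w' => Disjoint (B w) (B w')) ∧
  (∀ ⦃w w'⦄, H.Adj w w' → ∃ u ∈ B w, ∃ v ∈ B w', G.Adj u v)

/-- `H` is a minor of `G`. -/
def IsMinorOf {V W : Type*} (H : SimpleGraph W) (G : SimpleGraph V) : Prop :=
  ∃ B : W → Set V, IsModelOf G H B

/-- `(Tr, 𝒱)` is a tree-decomposition of `G`. -/
structure IsTreeDecomp {V T : Type*} (G : SimpleGraph V) (Tr : SimpleGraph T)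
    (𝒱 : T → Set V) : Prop where
  tree : Tr.IsTree
  coverV : ∀ v, ∃ t, v ∈ 𝒱 t
  coverE : ∀ ⦃u v⦄, G.Adj u v → ∃ t, u ∈ 𝒱 t ∧ v ∈ 𝒱 t
  sep : ∀ ⦃x z : T⦄ (p : Tr.Walk x z), p.IsPath → ∀ y ∈ p.support, 𝒱 x ∩ 𝒱 z ⊆ 𝒱 y

/-- `G` is `k`-connected. -/
def KConnected {V : Type*} (G : SimpleGraph V) (k : ℕ) : Prop :=
  (k < Nat.card V ∨ Infinite V) ∧
  ∀ s : Set V, s.Finite → s.ncard < k → (G.induce sᶜ).Connected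


/-- The wheel `W_k`: a cycle of length `k` (on `ZMod k`) plus a hub `none` adjacent to
all cycle vertices. -/
def wheel (k : ℕ) : SimpleGraph (Option (ZMod k)) :=
  SimpleGraph.fromRel (fun a b =>
    match a, b with
    | none, some _ => True
    | some i, some j => j = i + 1
    | _, _ => False)

/-- `D_k`: a cycle of length `k` plus two additional nonadjacent vertices each adjacent
to all cycle vertices. -/
def Dgraph (k : ℕ) : SimpleGraph (ZMod k ⊕ Fin 2) :=
  SimpleGraph.fromRel (fun a b =>
    match a, b with
    | .inl i, .inl j => j = i + 1
    | .inl _, .inr _ => True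
    | _, _ => False)

/-- `O_k`: the circular ladder on `2k` vertices. -/
def Ograph (k : ℕ) : SimpleGraph (ZMod k × ZMod 2) :=
  SimpleGraph.fromRel (fun p q =>
    (p.2 = q.2 ∧ q.1 = p.1 + 1) ∨ (p.1 = q.1 ∧ q.2 = p.2 + 1))

/-- `M_k`: the Möbius ladder on `2k` vertices. -/
def Mgraph (k : ℕ) : SimpleGraph (ZMod (2 * k)) :=
  SimpleGraph.fromRel (fun i j => j = i + 1 ∨ j = i + k)

/-- `R_2`: a ray `0, 1, 2, …` plus two nonadjacent vertices each adjacent to every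
vertex of the ray. -/
def R2 : SimpleGraph (ℕ ⊕ Fin 2) :=
  SimpleGraph.fromRel (fun a b =>
    match a, b with
    | .inl i, .inl j => j = i + 1
    | .inl _, .inr _ => True
    | _, _ => False)

-- Auxiliary development
/-- cone over a graph: add a universal vertex `none`. -/
def cone {V : Type*} (G : SimpleGraph V) : SimpleGraph (Option V) where
  Adj a b := match a, b with
    | none, none => False
    | none, some _ => True
    | some _, none => True
    | some u, some v => G.Adj u v
  symm := ⟨by rintro (_|u) (_|v) h <;> simp_all <;> exact h.symm⟩
  loopless := ⟨by rintro (_|u) h <;> simp_all <;> exact G.loopless u h⟩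

@[simp] lemma cone_adj_some_some {V : Type*} {G : SimpleGraph V} {u v : V} :
    (cone G).Adj (some u) (some v) ↔ G.Adj u v := Iff.rfl
@[simp] lemma cone_adj_none_some {V : Type*} {G : SimpleGraph V} {v : V} :
    (cone G).Adj none (some v) := trivial
@[simp] lemma cone_adj_some_none {V : Type*} {G : SimpleGraph V} {v : V} :
    (cone G).Adj (some v) none := trivial

/-- iso between induced subgraphs avoiding the apex. -/
noncomputable def coneInduceIso {V : Type*} (G : SimpleGraph V) (s : Set (Option V))
    (hs : none ∉ s) : G.induce (some ⁻¹' s) ≃g (cone G).induce s where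
  toEquiv :=
  { toFun := fun v => ⟨some v.1, v.2⟩
    invFun := fun w => ⟨w.1.get (by
        rcases w with ⟨o, ho⟩; cases o with
        | none => exact absurd ho hs
        | some a => rfl), by
        rcases w with ⟨o, ho⟩; cases o with
        | none => exact absurd ho hs
        | some a => exact ho⟩
    left_inv := fun v => rfl
    right_inv := fun w => by
      rcases w with ⟨o, ho⟩; cases o with
      | none => exact absurd ho hs
      | some a => rfl }
  map_rel_iff' := Iff.rfl


lemma cone_kconnected {V : Type} [Fintype V] {G : SimpleGraph V}
    (h : KConnected G 3) : KConnected (cone G) 4 := by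
  obtain ⟨hcard, hconn⟩ := h
  have hV : 3 < Fintype.card V := by
    rcases hcard with h | h
    · simpa [Nat.card_eq_fintype_card] using h
    · exact absurd h (not_infinite_iff_finite.mpr inferInstance)
  constructor
  · left
    simp only [Nat.card_eq_fintype_card, Fintype.card_option]
    omega
  · intro s hsfin hscard
    by_cases hns : none ∈ s
    · -- removed set contains the apex
      set s' : Set V := some ⁻¹' s with hs'
      have himg : some '' s' = s \ {none} := by
        ext x
        cases x with
        | none => simp
        | some a => simp [hs']
      have hpos : 0 < s.ncard := (Set.ncard_pos hsfin).mpr ⟨none, hns⟩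
      have hcard' : s'.ncard < 3 := by
        have h1 : (some '' s').ncard = s'.ncard :=
          Set.ncard_image_of_injective _ (Option.some_injective V)
        have h2 : (s \ {none}).ncard = s.ncard - 1 :=
          Set.ncard_diff_singleton_of_mem hns
        rw [himg, h2] at h1
        omega
      have hc : (G.induce s'ᶜ).Connected := hconn s' (hsfin.preimage (Option.some_injective V).injOn) hcard'
      have hcompl : sᶜ = some '' s'ᶜ := by
        ext x
        cases x with
        | none => simp [hns]
        | some a => simp [hs']
      have hpre : some ⁻¹' (some '' s'ᶜ) = s'ᶜ :=
        Set.preimage_image_eq _ (Option.some_injective V)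
      have hnone : none ∉ some '' s'ᶜ := by simp
      have := (coneInduceIso G (some '' s'ᶜ) hnone).connected_iff
      rw [hcompl]
      rw [← this, hpre]
      exact hc
    · -- apex survives; everything is joined through it
      have hnmem : (none : Option V) ∈ sᶜ := hns
      haveI : Nonempty (sᶜ : Set (Option V)) := ⟨⟨none, hnmem⟩⟩
      refine ⟨fun a b => ?_⟩
      have key : ∀ x : (sᶜ : Set (Option V)), ((cone G).induce sᶜ).Reachable x ⟨none, hnmem⟩ := by
        rintro ⟨x, hx⟩
        cases x with
        | none => rfl
        | some a =>
          exact SimpleGraph.Adj.reachable (by simp [SimpleGraph.comap] : ((cone G).induce sᶜ).Adj ⟨some a, hx⟩ ⟨none, hnmem⟩)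
      exact (key a).trans (key b).symm

/-- a partial model: only the branch sets indexed by `S` are required to behave. -/
def IsModelOn {V T : Type*} (G : SimpleGraph V) (H : SimpleGraph T) (B : T → Set V)
    (S : Set T) : Prop :=
  (∀ t ∈ S, (B t).Nonempty) ∧ (∀ t ∈ S, (G.induce (B t)).Connected) ∧
  (∀ t ∈ S, ∀ t' ∈ S, t ≠ t' → Disjoint (B t) (B t')) ∧
  (∀ t ∈ S, ∀ t' ∈ S, H.Adj t t' → ∃ u ∈ B t, ∃ v ∈ B t', G.Adj u v)

lemma IsModelOn.comp {V T U : Type*} {G : SimpleGraph V} {H : SimpleGraph T}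
    {K : SimpleGraph U} {B : T → Set V} {S : Set T}
    (hB : IsModelOn G H B S) {C : U → Set T} (hC : IsModelOf H K C)
    (hCS : ∀ u, C u ⊆ S) : IsMinorOf K G := by
  obtain ⟨hBne, hBconn, hBdisj, hBadj⟩ := hB
  obtain ⟨hCne, hCconn, hCdisj, hCadj⟩ := hC
  refine ⟨fun u => ⋃ t ∈ C u, B t, ?_, ?_, ?_, ?_⟩
  · intro u
    obtain ⟨t, ht⟩ := hCne u
    obtain ⟨x, hx⟩ := hBne t (hCS u ht)
    exact ⟨x, Set.mem_biUnion ht hx⟩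
  · intro u
    set D : Set V := ⋃ t ∈ C u, B t with hD
    -- reachability within one branch set
    have hsub : ∀ t ∈ C u, B t ⊆ D := fun t ht => Set.subset_biUnion_of_mem ht
    have within : ∀ t (ht : t ∈ C u), ∀ x (hx : x ∈ B t) y (hy : y ∈ B t),
        (G.induce D).Reachable ⟨x, hsub t ht hx⟩ ⟨y, hsub t ht hy⟩ := by
      intro t ht x hx y hy
      have h1 : (G.induce (B t)).Reachable ⟨x, hx⟩ ⟨y, hy⟩ :=
        (hBconn t (hCS u ht)).preconnected _ _
      have := h1.map (G.induceHomOfLE (hsub t ht)).toHom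
      exact this
    -- reachability across a walk in H
    have cross : ∀ (a b : (C u : Set T)) (p : (H.induce (C u)).Walk a b),
        ∀ x (hx : x ∈ B a.1) y (hy : y ∈ B b.1),
        (G.induce D).Reachable ⟨x, hsub a.1 a.2 hx⟩ ⟨y, hsub b.1 b.2 hy⟩ := by
      intro a b p
      induction p with
      | nil => intro x hx y hy; exact within _ (Subtype.prop _) x hx y hy
      | @cons a c b hadj p ih =>
        intro x hx y hy
        have hadj' : H.Adj a.1 c.1 := hadj
        obtain ⟨x', hx', y', hy', hxy⟩ := hBadj a.1 (hCS u a.2) c.1 (hCS u c.2) hadj'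
        have e : (G.induce D).Adj ⟨x', hsub a.1 a.2 hx'⟩ ⟨y', hsub c.1 c.2 hy'⟩ := hxy
        exact ((within a.1 a.2 x hx x' hx').trans e.reachable).trans (ih y' hy' y hy)
    obtain ⟨t0, ht0⟩ := hCne u
    obtain ⟨x0, hx0⟩ := hBne t0 (hCS u ht0)
    haveI : Nonempty (D : Set V) := ⟨⟨x0, hsub t0 ht0 hx0⟩⟩
    refine ⟨fun a b => ?_⟩
    obtain ⟨xa, hxa⟩ := a
    obtain ⟨xb, hxb⟩ := b
    obtain ⟨ta, hta, hxa'⟩ := Set.mem_iUnion₂.mp hxa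
    obtain ⟨tb, htb, hxb'⟩ := Set.mem_iUnion₂.mp hxb
    obtain ⟨q⟩ := (hCconn u).preconnected (⟨ta, hta⟩ : (C u : Set T)) ⟨tb, htb⟩
    have := cross ⟨ta, hta⟩ ⟨tb, htb⟩ q xa hxa' xb hxb'
    exact this
  · intro u u' huu'
    rw [Set.disjoint_left]
    rintro x hx hx'
    obtain ⟨t, ht, hxt⟩ := Set.mem_iUnion₂.mp hx
    obtain ⟨t', ht', hxt'⟩ := Set.mem_iUnion₂.mp hx'
    by_cases htt : t = t'
    · subst htt
      exact Set.disjoint_left.mp (hCdisj huu') ht ht'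
    · exact Set.disjoint_left.mp (hBdisj t (hCS u ht) t' (hCS u' ht') htt) hxt hxt'
  · intro u u' hadj
    obtain ⟨t, ht, t', ht', htt⟩ := hCadj hadj
    obtain ⟨x, hx, y, hy, hxy⟩ := hBadj t (hCS u ht) t' (hCS u' ht') htt
    exact ⟨x, Set.mem_biUnion ht hx, y, Set.mem_biUnion ht' hy, hxy⟩

/-- deleting the apex of a cone from a model. -/
lemma cone_delete {V T : Type*} [Nonempty T] {G : SimpleGraph V} {H : SimpleGraph T}
    {B : T → Set (Option V)} (h : IsModelOf (cone G) H B) :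
    ∃ t0 : T, IsModelOn G H (fun t => some ⁻¹' B t) {t0}ᶜ := by
  obtain ⟨hne, hconn, hdisj, hadj⟩ := h
  obtain ⟨t0, ht0⟩ : ∃ t0 : T, ∀ t, t ≠ t0 → none ∉ B t := by
    by_cases hex : ∃ t, none ∈ B t
    · obtain ⟨t0, ht0⟩ := hex
      refine ⟨t0, fun t htne hmem => ?_⟩
      exact Set.disjoint_left.mp (hdisj htne) hmem ht0
    · push_neg at hex
      exact ⟨Classical.arbitrary T, fun t _ => hex t⟩
  refine ⟨t0, ?_, ?_, ?_, ?_⟩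
  · rintro t (ht : t ≠ t0)
    obtain ⟨x, hx⟩ := hne t
    cases x with
    | none => exact absurd hx (ht0 t ht)
    | some a => exact ⟨a, hx⟩
  · rintro t (ht : t ≠ t0)
    have := (coneInduceIso G (B t) (ht0 t ht)).connected_iff
    rw [this]
    exact hconn t
  · rintro t (ht : t ≠ t0) t' (ht' : t' ≠ t0) htt
    rw [Set.disjoint_left]
    intro x hx hx'
    exact Set.disjoint_left.mp (hdisj htt) hx hx'
  · rintro t (ht : t ≠ t0) t' (ht' : t' ≠ t0) htt
    obtain ⟨x, hx, y, hy, hxy⟩ := hadj htt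
    cases x with
    | none => exact absurd hx (ht0 t ht)
    | some a =>
      cases y with
      | none => exact absurd hy (ht0 t' ht')
      | some b => exact ⟨a, hx, b, hy, hxy⟩

section Helpers
variable {T : Type*} {H : SimpleGraph T}

lemma induce_singleton_connected (v : T) : (H.induce {v}).Connected := by
  haveI : Nonempty ({v} : Set T) := ⟨⟨v, rfl⟩⟩
  refine ⟨fun a b => ?_⟩
  have : a = b := Subtype.ext (a.2.trans b.2.symm)
  rw [this]

lemma induce_pair_connected {u v : T} (h : H.Adj u v) :
    (H.induce {u, v}).Connected := by
  haveI : Nonempty ({u, v} : Set T) := ⟨⟨u, Or.inl rfl⟩⟩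
  have hu : u ∈ ({u, v} : Set T) := Or.inl rfl
  have hv : v ∈ ({u, v} : Set T) := Or.inr rfl
  have key : ∀ x : ({u, v} : Set T), (H.induce {u, v}).Reachable x ⟨u, hu⟩ := by
    rintro ⟨x, hx | hx⟩
    · subst hx; rfl
    · subst hx
      exact SimpleGraph.Adj.reachable (by exact h.symm)
  exact ⟨fun a b => (key a).trans (key b).symm⟩

lemma induce_triple_connected {u v w : T} (h1 : H.Adj u v) (h2 : H.Adj v w) :
    (H.induce {u, v, w}).Connected := by
  haveI : Nonempty ({u, v, w} : Set T) := ⟨⟨u, Or.inl rfl⟩⟩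
  have hu : u ∈ ({u, v, w} : Set T) := Or.inl rfl
  have hv : v ∈ ({u, v, w} : Set T) := Or.inr (Or.inl rfl)
  have hw : w ∈ ({u, v, w} : Set T) := Or.inr (Or.inr rfl)
  have key : ∀ x : ({u, v, w} : Set T), (H.induce {u, v, w}).Reachable x ⟨v, hv⟩ := by
    rintro ⟨x, hx | hx | hx⟩
    · subst hx; exact SimpleGraph.Adj.reachable (by exact h1)
    · subst hx; rfl
    · subst hx; exact SimpleGraph.Adj.reachable (by exact h2.symm)
  exact ⟨fun a b => (key a).trans (key b).symm⟩

lemma induce_chain_connected (f : ℕ → T) (n : ℕ)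
    (hadj : ∀ i, i + 1 ≤ n → H.Adj (f i) (f (i + 1))) :
    (H.induce (f '' Set.Iic n)).Connected := by
  haveI : Nonempty (f '' Set.Iic n : Set T) := ⟨⟨f 0, ⟨0, Nat.zero_le n, rfl⟩⟩⟩
  have mem : ∀ i, i ≤ n → f i ∈ (f '' Set.Iic n : Set T) := fun i hi => ⟨i, hi, rfl⟩
  have key : ∀ i (hi : i ≤ n),
      (H.induce (f '' Set.Iic n)).Reachable ⟨f 0, mem 0 (Nat.zero_le n)⟩ ⟨f i, mem i hi⟩ := by
    intro i
    induction i with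
    | zero => intro _; rfl
    | succ m ih =>
      intro hi
      have hm : m ≤ n := Nat.le_of_succ_le hi
      refine (ih hm).trans (SimpleGraph.Adj.reachable ?_)
      exact hadj m hi
  refine ⟨fun a b => ?_⟩
  obtain ⟨xa, ia, hia, rfl⟩ := a
  obtain ⟨xb, ib, hib, rfl⟩ := b
  exact (key _ hia).symm.trans (key _ hib)

lemma cast_inj_zmod {n : ℕ} [NeZero n] {i j : ℕ} (hi : i < n) (hj : j < n)
    (h : (i : ZMod n) = (j : ZMod n)) : i = j := by
  have := congrArg ZMod.val h
  rwa [ZMod.val_cast_of_lt hi, ZMod.val_cast_of_lt hj] at this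

end Helpers

lemma zmod_succ_val {k : ℕ} [NeZero k] (i j : ZMod k) (h : j = i + 1) :
    (i.val + 1 < k ∧ j.val = i.val + 1) ∨ (i.val = k - 1 ∧ j.val = 0) := by
  have hk : 0 < k := Nat.pos_of_ne_zero (NeZero.ne k)
  have hi : i.val < k := ZMod.val_lt i
  have hj : j = ((i.val + 1 : ℕ) : ZMod k) := by
    rw [h]
    push_cast
    rw [ZMod.natCast_rightInverse i]
  rcases Nat.lt_or_ge (i.val + 1) k with hlt | hge
  · left
    refine ⟨hlt, ?_⟩
    rw [hj, ZMod.val_natCast, Nat.mod_eq_of_lt hlt]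
  · right
    have : i.val + 1 = k := by omega
    constructor
    · omega
    · rw [hj, this, ZMod.val_natCast, Nat.mod_self]

lemma wheel_model {T : Type*} {H : SimpleGraph T} {k : ℕ} (hk : 3 ≤ k)
    (S : Set T) (hub : Set T) (rim : ℕ → Set T)
    (hhubne : hub.Nonempty) (hhubconn : (H.induce hub).Connected) (hhubS : hub ⊆ S)
    (hrimne : ∀ i, i < k → (rim i).Nonempty)
    (hrimconn : ∀ i, i < k → (H.induce (rim i)).Connected)
    (hrimS : ∀ i, i < k → rim i ⊆ S)
    (hdisj : ∀ i, i < k → ∀ j, j < k → i ≠ j → Disjoint (rim i) (rim j))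
    (hhubdisj : ∀ i, i < k → Disjoint hub (rim i))
    (hedge : ∀ i, i + 1 < k → ∃ u ∈ rim i, ∃ v ∈ rim (i + 1), H.Adj u v)
    (hwrap : ∃ u ∈ rim (k - 1), ∃ v ∈ rim 0, H.Adj u v)
    (hspoke : ∀ i, i < k → ∃ u ∈ hub, ∃ v ∈ rim i, H.Adj u v) :
    ∃ C : Option (ZMod k) → Set T, IsModelOf H (wheel k) C ∧ ∀ w, C w ⊆ S := by
  haveI : NeZero k := ⟨by omega⟩
  refine ⟨fun w => match w with | none => hub | some j => rim j.val, ⟨?_, ?_, ?_, ?_⟩, ?_⟩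
  · rintro (_ | j)
    · exact hhubne
    · exact hrimne j.val (ZMod.val_lt j)
  · rintro (_ | j)
    · exact hhubconn
    · exact hrimconn j.val (ZMod.val_lt j)
  · rintro (_ | i) (_ | j) hne
    · exact absurd rfl hne
    · exact hhubdisj j.val (ZMod.val_lt j)
    · exact (hhubdisj i.val (ZMod.val_lt i)).symm
    · have hij : i ≠ j := fun h => hne (by rw [h])
      exact hdisj i.val (ZMod.val_lt i) j.val (ZMod.val_lt j)
        (fun h => hij (ZMod.val_injective k h))
  · rintro (_ | i) (_ | j) hadj
    · exact absurd hadj (SimpleGraph.irrefl _)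
    · -- hub to rim
      exact hspoke j.val (ZMod.val_lt j)
    · -- rim to hub
      obtain ⟨u, hu, v, hv, huv⟩ := hspoke i.val (ZMod.val_lt i)
      exact ⟨v, hv, u, hu, huv.symm⟩
    · -- rim to rim
      obtain ⟨hne, hrel⟩ := hadj
      have key : ∀ a b : ZMod k, b = a + 1 →
          ∃ u ∈ rim a.val, ∃ v ∈ rim b.val, H.Adj u v := by
        intro a b hb
        rcases zmod_succ_val a b hb with ⟨h1, h2⟩ | ⟨h1, h2⟩
        · rw [h2]; exact hedge a.val h1
        · rw [h1, h2]; exact hwrap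
      rcases hrel with hrel | hrel
      · simp only at hrel
        exact key i j hrel
      · simp only at hrel
        obtain ⟨u, hu, v, hv, huv⟩ := key j i hrel
        exact ⟨v, hv, u, hu, huv.symm⟩
  · rintro (_ | j)
    · exact hhubS
    · exact hrimS j.val (ZMod.val_lt j)

lemma Kmodel_of (k : ℕ) (t0 : Fin 4 ⊕ Fin (k + 1))
    (g1 : Fin 3 → Fin 4) (g2 : Fin k → Fin (k + 1))
    (hg1 : Function.Injective g1) (hg2 : Function.Injective g2)
    (h1 : ∀ i, Sum.inl (g1 i) ≠ t0) (h2 : ∀ j, Sum.inr (g2 j) ≠ t0) :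
    ∃ C : Fin 3 ⊕ Fin k → Set (Fin 4 ⊕ Fin (k + 1)),
      IsModelOf (completeBipartiteGraph (Fin 4) (Fin (k + 1)))
        (completeBipartiteGraph (Fin 3) (Fin k)) C ∧ ∀ w, C w ⊆ {t0}ᶜ := by
  refine ⟨fun w => match w with
    | .inl i => {Sum.inl (g1 i)}
    | .inr j => {Sum.inr (g2 j)}, ⟨?_, ?_, ?_, ?_⟩, ?_⟩
  · rintro (i | j) <;> exact Set.singleton_nonempty _
  · rintro (i | j) <;> exact induce_singleton_connected _
  · rintro (i | i) (j | j) hne <;> simp only [Set.disjoint_singleton] <;>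
      simp_all [hg1.ne_iff, hg2.ne_iff]
  · rintro (i | i) (j | j) hadj <;> simp_all [completeBipartiteGraph]
  · rintro (i | j) x hx <;> simp only [Set.mem_singleton_iff] at hx <;> subst hx
    · exact h1 i
    · exact h2 j

lemma Kmodel (k : ℕ) (t0 : Fin 4 ⊕ Fin (k + 1)) :
    ∃ C : Fin 3 ⊕ Fin k → Set (Fin 4 ⊕ Fin (k + 1)),
      IsModelOf (completeBipartiteGraph (Fin 4) (Fin (k + 1)))
        (completeBipartiteGraph (Fin 3) (Fin k)) C ∧ ∀ w, C w ⊆ {t0}ᶜ := by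
  rcases t0 with a | b
  · exact Kmodel_of k _ a.succAbove Fin.castSucc a.succAbove_right_injective
      (Fin.castSucc_injective k) (fun i => by simp [a.succAbove_ne i]) (fun j => by simp)
  · exact Kmodel_of k _ Fin.castSucc b.succAbove (Fin.castSucc_injective 3)
      b.succAbove_right_injective (fun i => by simp) (fun j => by simp [b.succAbove_ne j])

section Dsec
variable {k : ℕ}


lemma connected_congr {T : Type*} {H : SimpleGraph T} {s s' : Set T} (h : s = s')
    (hc : (H.induce s).Connected) : (H.induce s').Connected := h ▸ hc

lemma one_ne_zero_zmod {n : ℕ} (hn : 2 ≤ n) : (1 : ZMod n) ≠ 0 := by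
  haveI : NeZero n := ⟨by omega⟩
  intro h
  have := congrArg ZMod.val h
  rw [ZMod.val_one_eq_one_mod, ZMod.val_zero, Nat.mod_eq_of_lt hn] at this
  omega

lemma add_one_ne_self_zmod {n : ℕ} (hn : 2 ≤ n) (x : ZMod n) : x ≠ x + 1 := by
  intro h
  nth_rewrite 1 [← add_zero x] at h
  exact one_ne_zero_zmod hn (add_left_cancel h).symm

lemma Dmodel (hk : 3 ≤ k) (t0 : ZMod (k + 1) ⊕ Fin 2) :
    ∃ C : Option (ZMod k) → Set (ZMod (k + 1) ⊕ Fin 2),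
      IsModelOf (Dgraph (k + 1)) (wheel k) C ∧ ∀ w, C w ⊆ {t0}ᶜ := by
  haveI : NeZero (k + 1) := ⟨by omega⟩
  have hk2 : 2 ≤ k + 1 := by omega
  -- generic adjacency facts
  have adj_cross : ∀ (i : ZMod (k + 1)) (b : Fin 2), (Dgraph (k + 1)).Adj (Sum.inl i) (Sum.inr b) :=
    fun i b => ⟨by simp, Or.inl trivial⟩
  have adj_consec : ∀ (i : ZMod (k + 1)), (Dgraph (k + 1)).Adj (Sum.inl i) (Sum.inl (i + 1)) := by
    intro i
    refine ⟨fun h => add_one_ne_self_zmod hk2 i (Sum.inl.inj h), Or.inl rfl⟩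
  rcases t0 with m | b
  · -- deleted vertex is a cycle vertex `m` : hub is `inr 0`, cycle goes around through `inr 1`
    set dD : ℕ → ZMod (k + 1) ⊕ Fin 2 := fun n => Sum.inl (m + (n : ZMod (k + 1))) with hdD
    have dD_succ : ∀ x : ℕ, dD (x + 1) = Sum.inl ((m + (x : ZMod (k+1))) + 1) := by
      intro x; simp only [hdD]; congr 1; push_cast; ring
    have adjdD : ∀ x : ℕ, (Dgraph (k + 1)).Adj (dD x) (dD (x + 1)) := by
      intro x; rw [dD_succ x]; exact adj_consec _
    have dD_inj : ∀ x, x ≤ k → ∀ y, y ≤ k → dD x = dD y → x = y := by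
      intro x hx y hy h
      have h2 : (x : ZMod (k+1)) = (y : ZMod (k+1)) := by
        have := Sum.inl.inj h
        exact add_left_cancel this
      exact cast_inj_zmod (by omega) (by omega) h2
    have dD_ne_inlm : ∀ x, 1 ≤ x → x ≤ k → dD x ≠ Sum.inl m := by
      intro x h1 hx h
      have h2 : m + (x : ZMod (k+1)) = m + (0 : ℕ) := by
        simpa using Sum.inl.inj h
      have := dD_inj x hx 0 (by omega) (by simp only [hdD]; rw [h2])
      omega
    set rim : ℕ → Set (ZMod (k + 1) ⊕ Fin 2) := fun i =>
      if i = k - 1 then {dD k, Sum.inr 1} else {dD (i + 1)} with hrim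
    have mem1 : ∀ i, i < k → dD (i + 1) ∈ rim i := by
      intro i hi
      by_cases h : i = k - 1
      · rw [hrim]; simp only [if_pos h]
        left; rw [h]; congr 1; omega
      · rw [hrim]; simp only [if_neg h]; rfl
    have mem_rim : ∀ i, i < k → ∀ x ∈ rim i, x = dD (i + 1) ∨ (i = k - 1 ∧ x = Sum.inr 1) := by
      intro i hi x hx
      by_cases h : i = k - 1
      · rw [hrim] at hx; simp only [if_pos h] at hx
        rcases hx with hx | hx
        · left; rw [hx, h]; congr 1; omega
        · right; exact ⟨h, hx⟩
      · rw [hrim] at hx; simp only [if_neg h] at hx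
        left; exact hx
    refine wheel_model hk _ {Sum.inr 0} rim (Set.singleton_nonempty _)
      (induce_singleton_connected _) ?_ ?_ ?_ ?_ ?_ ?_ ?_ ?_ ?_
    · intro x hx; simp only [Set.mem_singleton_iff] at hx; subst hx; simp
    · intro i hi; exact ⟨dD (i + 1), mem1 i hi⟩
    · intro i hi
      by_cases h : i = k - 1
      · refine connected_congr ?_ (induce_pair_connected
          (show (Dgraph (k+1)).Adj (dD k) (Sum.inr 1) by
            simp only [hdD]; exact adj_cross _ 1))
        rw [hrim]; simp only [if_pos h]
      · refine connected_congr ?_ (induce_singleton_connected (dD (i + 1)))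
        rw [hrim]; simp only [if_neg h]
    · intro i hi x hx
      rcases mem_rim i hi x hx with h | ⟨_, h⟩
      · subst h
        simp only [Set.mem_compl_iff, Set.mem_singleton_iff]
        exact dD_ne_inlm (i + 1) (by omega) (by omega)
      · subst h; simp
    · intro i hi j hj hij
      rw [Set.disjoint_left]
      intro x hxi hxj
      rcases mem_rim i hi x hxi with h1 | ⟨hi1, h1⟩ <;>
        rcases mem_rim j hj x hxj with h2 | ⟨hj2, h2⟩
      · exact hij (by have := dD_inj (i+1) (by omega) (j+1) (by omega) (h1.symm.trans h2); omega)
      · rw [h1] at h2; exact absurd h2 (by simp [hdD])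
      · rw [h1] at h2; exact absurd h2.symm (by simp [hdD])
      · exact hij (hi1.trans hj2.symm)
    · intro i hi
      rw [Set.disjoint_left]
      intro x hx hxr
      simp only [Set.mem_singleton_iff] at hx
      subst hx
      rcases mem_rim i hi _ hxr with h | ⟨_, h⟩
      · exact absurd h (by simp [hdD])
      · exact absurd h (by simp)
    · intro i hilt
      exact ⟨dD (i + 1), mem1 i (by omega), dD (i + 2), by simpa using mem1 (i+1) hilt,
        by simpa using adjdD (i + 1)⟩
    · -- wrap: inr 1 ∈ rim (k-1), dD 1 ∈ rim 0
      refine ⟨Sum.inr 1, ?_, dD 1, by simpa using mem1 0 (by omega), ?_⟩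
      · rw [hrim]; simp only [if_pos rfl]; right; rfl
      · exact (adj_cross _ 1).symm
    · intro i hi
      exact ⟨Sum.inr 0, rfl, dD (i + 1), mem1 i hi, (adj_cross _ 0).symm⟩
  · -- deleted vertex is an apex `inr b`: hub is the other apex
    set b' : Fin 2 := if b = 0 then 1 else 0 with hb'
    have hbb : b' ≠ b := by
      rw [hb']; split_ifs with h
      · rw [h]; decide
      · exact fun hh => h hh.symm
    set cD : ℕ → ZMod (k + 1) ⊕ Fin 2 := fun n => Sum.inl ((n : ZMod (k + 1))) with hcD
    have cD_succ : ∀ x : ℕ, cD (x + 1) = Sum.inl (((x : ZMod (k+1))) + 1) := by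
      intro x; simp only [hcD]; congr 1; push_cast; ring
    have adjcD : ∀ x : ℕ, (Dgraph (k + 1)).Adj (cD x) (cD (x + 1)) := by
      intro x; rw [cD_succ x]; exact adj_consec _
    have cD_inj : ∀ x, x ≤ k → ∀ y, y ≤ k → cD x = cD y → x = y := by
      intro x hx y hy h
      exact cast_inj_zmod (by omega) (by omega) (Sum.inl.inj h)
    set rim : ℕ → Set (ZMod (k + 1) ⊕ Fin 2) := fun i =>
      if i = k - 1 then {cD (k - 1), cD k} else {cD i} with hrim
    have mem1 : ∀ i, i < k → cD i ∈ rim i := by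
      intro i hi
      by_cases h : i = k - 1
      · rw [hrim]; simp only [if_pos h]; left; rw [h]
      · rw [hrim]; simp only [if_neg h]; rfl
    have mem_rim : ∀ i, i < k → ∀ x ∈ rim i, x = cD i ∨ (i = k - 1 ∧ x = cD k) := by
      intro i hi x hx
      by_cases h : i = k - 1
      · rw [hrim] at hx; simp only [if_pos h] at hx
        rcases hx with hx | hx
        · left; rw [hx, h]
        · right; exact ⟨h, hx⟩
      · rw [hrim] at hx; simp only [if_neg h] at hx
        left; exact hx
    refine wheel_model hk _ {Sum.inr b'} rim (Set.singleton_nonempty _)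
      (induce_singleton_connected _) ?_ ?_ ?_ ?_ ?_ ?_ ?_ ?_ ?_
    · intro x hx; simp only [Set.mem_singleton_iff] at hx; subst hx
      simp only [Set.mem_compl_iff, Set.mem_singleton_iff]
      exact fun h => hbb (Sum.inr.inj h)
    · intro i hi; exact ⟨cD i, mem1 i hi⟩
    · intro i hi
      by_cases h : i = k - 1
      · have hck : cD ((k - 1) + 1) = cD k := by congr 1; omega
        refine connected_congr ?_ (induce_pair_connected (adjcD (k - 1)))
        rw [hrim]; simp only [if_pos h, hck]
      · refine connected_congr ?_ (induce_singleton_connected (cD i))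
        rw [hrim]; simp only [if_neg h]
    · intro i hi x hx
      rcases mem_rim i hi x hx with h | ⟨_, h⟩ <;> subst h <;> simp [hcD]
    · intro i hi j hj hij
      rw [Set.disjoint_left]
      intro x hxi hxj
      rcases mem_rim i hi x hxi with h1 | ⟨hi1, h1⟩ <;>
        rcases mem_rim j hj x hxj with h2 | ⟨hj2, h2⟩
      · exact hij (cD_inj i (by omega) j (by omega) (h1.symm.trans h2))
      · have := cD_inj i (by omega) k (by omega) (h1.symm.trans h2); omega
      · have := cD_inj k (by omega) j (by omega) (h1.symm.trans h2); omega
      · exact hij (hi1.trans hj2.symm)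
    · intro i hi
      rw [Set.disjoint_left]
      intro x hx hxr
      simp only [Set.mem_singleton_iff] at hx
      subst hx
      rcases mem_rim i hi _ hxr with h | ⟨_, h⟩ <;> exact absurd h (by simp [hcD])
    · intro i hilt
      exact ⟨cD i, mem1 i (by omega), cD (i + 1), mem1 (i+1) hilt, adjcD i⟩
    · -- wrap: cD k ∈ rim (k-1), cD 0 ∈ rim 0
      refine ⟨cD k, ?_, cD 0, mem1 0 (by omega), ?_⟩
      · rw [hrim]; simp only [if_pos rfl]; right; rfl
      · have h0 : cD (k + 1) = cD 0 := by
          simp only [hcD]; congr 1; push_cast; simp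
        have := adjcD k
        rwa [h0] at this
    · intro i hi
      exact ⟨Sum.inr b', rfl, cD i, mem1 i hi, (adj_cross _ b').symm⟩
end Dsec

lemma Omodel {k : ℕ} (hk : 3 ≤ k) (t0 : ZMod (k + 1) × ZMod 2) :
    ∃ C : Option (ZMod k) → Set (ZMod (k + 1) × ZMod 2),
      IsModelOf (Ograph (k + 1)) (wheel k) C ∧ ∀ w, C w ⊆ {t0}ᶜ := by
  haveI : NeZero (k + 1) := ⟨by omega⟩
  have hk2 : 2 ≤ k + 1 := by omega
  obtain ⟨m, s⟩ := t0
  set f : ℕ → ZMod (k + 1) × ZMod 2 := fun n => (m + (n : ZMod (k + 1)), s) with hf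
  set g : ℕ → ZMod (k + 1) × ZMod 2 := fun n => (m + (n : ZMod (k + 1)), s + 1) with hg
  have fsucc : ∀ x : ℕ, f (x + 1) = (m + (x : ZMod (k+1)) + 1, s) := by
    intro x; simp only [hf]; rw [Prod.mk.injEq]; constructor
    · push_cast; ring
    · rfl
  have gsucc : ∀ x : ℕ, g (x + 1) = (m + (x : ZMod (k+1)) + 1, s + 1) := by
    intro x; simp only [hg]; rw [Prod.mk.injEq]; constructor
    · push_cast; ring
    · rfl
  have adjf : ∀ x : ℕ, (Ograph (k + 1)).Adj (f x) (f (x + 1)) := by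
    intro x
    rw [fsucc x]
    refine ⟨fun h => ?_, Or.inl (Or.inl ⟨rfl, rfl⟩)⟩
    have := congrArg Prod.fst h
    simp only [hf] at this
    exact add_one_ne_self_zmod hk2 _ this
  have adjg : ∀ x : ℕ, (Ograph (k + 1)).Adj (g x) (g (x + 1)) := by
    intro x
    rw [gsucc x]
    refine ⟨fun h => ?_, Or.inl (Or.inl ⟨rfl, rfl⟩)⟩
    have := congrArg Prod.fst h
    simp only [hg] at this
    exact add_one_ne_self_zmod hk2 _ this
  have adjfg : ∀ x : ℕ, (Ograph (k + 1)).Adj (f x) (g x) := by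
    intro x
    refine ⟨fun h => ?_, Or.inl (Or.inr ⟨rfl, rfl⟩)⟩
    have := congrArg Prod.snd h
    simp only [hf, hg] at this
    exact add_one_ne_self_zmod (by omega) s this
  have g_ne_f : ∀ x y : ℕ, g x ≠ f y := by
    intro x y h
    have := congrArg Prod.snd h
    simp only [hf, hg] at this
    exact add_one_ne_self_zmod (by omega) s this.symm
  have g_inj_mod : ∀ x y : ℕ, g x = g y → x % (k + 1) = y % (k + 1) := by
    intro x y h
    have h1 : (x : ZMod (k+1)) = (y : ZMod (k+1)) := by
      have := congrArg Prod.fst h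
      simp only [hg] at this
      exact add_left_cancel this
    have := congrArg ZMod.val h1
    rwa [ZMod.val_natCast, ZMod.val_natCast] at this
  have f_ne_t0 : ∀ x, 1 ≤ x → x ≤ k → f x ≠ (m, s) := by
    intro x h1 h2 h
    have h3 : m + (x : ZMod (k+1)) = m + ((0 : ℕ) : ZMod (k+1)) := by
      have := congrArg Prod.fst h
      simpa [hf] using this
    have := cast_inj_zmod (n := k+1) (by omega) (by omega) (add_left_cancel h3)
    omega
  have g_ne_t0 : ∀ x, g x ≠ (m, s) := by
    intro x h
    have := congrArg Prod.snd h
    simp only [hg] at this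
    exact add_one_ne_self_zmod (by omega) s this.symm
  set rim : ℕ → Set (ZMod (k + 1) × ZMod 2) := fun i =>
    if i = k - 1 then {g k, g (k + 1)} else {g (i + 1)} with hrim
  have mem1 : ∀ i, i < k → g (i + 1) ∈ rim i := by
    intro i hi
    by_cases h : i = k - 1
    · rw [hrim]; simp only [if_pos h]
      left; rw [h]; congr 1; omega
    · rw [hrim]; simp only [if_neg h]; rfl
  have mem_rim : ∀ i, i < k → ∀ x ∈ rim i, x = g (i + 1) ∨ (i = k - 1 ∧ x = g (k + 1)) := by
    intro i hi x hx
    by_cases h : i = k - 1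
    · rw [hrim] at hx; simp only [if_pos h] at hx
      rcases hx with hx | hx
      · left; rw [hx, h]; congr 1; omega
      · right; exact ⟨h, hx⟩
    · rw [hrim] at hx; simp only [if_neg h] at hx
      left; exact hx
  have hubmem : ∀ i, i < k → f (i + 1) ∈ (fun t => f (t + 1)) '' Set.Iic (k - 1) :=
    fun i hi => ⟨i, by simp only [Set.mem_Iic]; omega, rfl⟩
  have hubchar : ∀ x ∈ (fun t => f (t + 1)) '' Set.Iic (k - 1), ∃ t, t + 1 ≤ k ∧ x = f (t + 1) := by
    rintro x ⟨t, ht, rfl⟩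
    exact ⟨t, by simp only [Set.mem_Iic] at ht; omega, rfl⟩
  refine wheel_model hk _ ((fun t => f (t + 1)) '' Set.Iic (k - 1)) rim
    ⟨f 1, hubmem 0 (by omega)⟩
    (induce_chain_connected _ (k - 1) (fun t _ => adjf (t + 1))) ?_ ?_ ?_ ?_ ?_ ?_ ?_ ?_ ?_
  · intro x hx
    obtain ⟨t, ht, rfl⟩ := hubchar x hx
    simp only [Set.mem_compl_iff, Set.mem_singleton_iff]
    exact f_ne_t0 (t + 1) (by omega) ht
  · intro i hi; exact ⟨g (i + 1), mem1 i hi⟩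
  · intro i hi
    by_cases h : i = k - 1
    · refine connected_congr ?_ (induce_pair_connected (adjg k))
      rw [hrim]; simp only [if_pos h]
    · refine connected_congr ?_ (induce_singleton_connected (g (i + 1)))
      rw [hrim]; simp only [if_neg h]
  · intro i hi x hx
    rcases mem_rim i hi x hx with h | ⟨_, h⟩ <;> subst h <;>
      simp only [Set.mem_compl_iff, Set.mem_singleton_iff] <;> apply g_ne_t0
  · intro i hi j hj hij
    rw [Set.disjoint_left]
    intro x hxi hxj
    rcases mem_rim i hi x hxi with h1 | ⟨hi1, h1⟩ <;>
      rcases mem_rim j hj x hxj with h2 | ⟨hj2, h2⟩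
    · have := g_inj_mod _ _ (h1.symm.trans h2)
      rw [Nat.mod_eq_of_lt (by omega), Nat.mod_eq_of_lt (by omega)] at this
      exact hij (by omega)
    · have := g_inj_mod _ _ (h1.symm.trans h2)
      rw [Nat.mod_eq_of_lt (by omega), Nat.mod_self] at this
      omega
    · have := g_inj_mod _ _ (h1.symm.trans h2)
      rw [Nat.mod_self, Nat.mod_eq_of_lt (by omega)] at this
      omega
    · exact hij (hi1.trans hj2.symm)
  · intro i hi
    rw [Set.disjoint_left]
    intro x hx hxr
    obtain ⟨t, _, rfl⟩ := hubchar x hx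
    rcases mem_rim i hi _ hxr with h | ⟨_, h⟩ <;> exact g_ne_f _ _ h.symm
  · intro i hilt
    exact ⟨g (i + 1), mem1 i (by omega), g (i + 2), by simpa using mem1 (i + 1) hilt,
      by simpa using adjg (i + 1)⟩
  · refine ⟨g (k + 1), ?_, g 1, by simpa using mem1 0 (by omega), ?_⟩
    · rw [hrim]; simp only [if_pos rfl]; right; rfl
    · have hp : g (k + 2) = g 1 := by
        simp only [hg]; rw [Prod.mk.injEq]
        refine ⟨?_, rfl⟩
        congr 1
        rw [show (k + 2 : ℕ) = (k + 1) + 1 from rfl, Nat.cast_add, ZMod.natCast_self,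
          Nat.cast_one, zero_add]
      have := adjg (k + 1)
      rwa [show k + 1 + 1 = k + 2 from rfl, hp] at this
  · intro i hi
    exact ⟨f (i + 1), hubmem i hi, g (i + 1), mem1 i hi, adjfg (i + 1)⟩

lemma Mmodel {k : ℕ} (hk : 3 ≤ k) (t0 : ZMod (2 * (k + 1))) :
    ∃ C : Option (ZMod k) → Set (ZMod (2 * (k + 1))),
      IsModelOf (Mgraph (k + 1)) (wheel k) C ∧ ∀ w, C w ⊆ {t0}ᶜ := by
  haveI : NeZero (2 * (k + 1)) := ⟨by omega⟩
  have hN : 2 ≤ 2 * (k + 1) := by omega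
  set m := t0 with hm
  set a : ℕ → ZMod (2 * (k + 1)) := fun n => m + (n : ZMod (2 * (k + 1))) with ha
  have asucc : ∀ x : ℕ, a (x + 1) = a x + 1 := by
    intro x; simp only [ha]; push_cast; ring
  have achord : ∀ x : ℕ, a (x + (k + 1)) = a x + ((k + 1 : ℕ) : ZMod (2 * (k + 1))) := by
    intro x; simp only [ha]; push_cast; ring
  have hc : ((k + 1 : ℕ) : ZMod (2 * (k + 1))) ≠ 0 := by
    intro h
    have := congrArg ZMod.val h
    rw [ZMod.val_natCast, ZMod.val_zero, Nat.mod_eq_of_lt (by omega)] at this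
    omega
  have adj1 : ∀ x : ℕ, (Mgraph (k + 1)).Adj (a x) (a (x + 1)) := by
    intro x
    refine ⟨fun h => ?_, ?_⟩
    · rw [asucc x] at h
      exact add_one_ne_self_zmod hN _ h
    · left
      exact Or.inl (asucc x)
  have adj2 : ∀ x : ℕ, (Mgraph (k + 1)).Adj (a x) (a (x + (k + 1))) := by
    intro x
    refine ⟨fun h => ?_, ?_⟩
    · rw [achord x] at h
      exact hc (left_eq_add.mp h)
    · left
      exact Or.inr (achord x)
  have a_inj : ∀ x, x ≤ 2 * k + 1 → ∀ y, y ≤ 2 * k + 1 → a x = a y → x = y := by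
    intro x hx y hy h
    have h2 : (x : ZMod (2 * (k + 1))) = (y : ZMod (2 * (k + 1))) := by
      simp only [ha] at h
      exact add_left_cancel h
    exact cast_inj_zmod (by omega) (by omega) h2
  have a_ne_t0 : ∀ x, 1 ≤ x → x ≤ 2 * k + 1 → a x ≠ t0 := by
    intro x h1 h2 h
    have h0 : a x = a 0 := by rw [h]; simp [ha, hm]
    have := a_inj x (by omega) 0 (by omega) h0
    omega
  set rim : ℕ → Set (ZMod (2 * (k + 1))) := fun i =>
    if i = 0 then {a 1, a (k + 2), a (k + 1)}
    else if i = k - 1 then {a k, a (2 * k + 1)}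
    else {a (i + 1)} with hrim
  have mem1 : ∀ i, i < k → a (i + 1) ∈ rim i := by
    intro i hi
    rcases Nat.eq_zero_or_pos i with h0 | h0
    · rw [hrim]; simp only [h0, eq_self_iff_true, if_true]; left; rfl
    · by_cases h1 : i = k - 1
      · rw [hrim]; simp only [if_neg (by omega : ¬ i = 0), if_pos h1]
        left; rw [h1]; congr 1; omega
      · rw [hrim]; simp only [if_neg (by omega : ¬ i = 0), if_neg h1]; rfl
  have mem_rim : ∀ i, i < k → ∀ x ∈ rim i, ∃ n, x = a n ∧ n ≤ 2 * k + 1 ∧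
      ((i = 0 ∧ (n = 1 ∨ n = k + 2 ∨ n = k + 1)) ∨
       (1 ≤ i ∧ i = k - 1 ∧ (n = k ∨ n = 2 * k + 1)) ∨
       (1 ≤ i ∧ i ≠ k - 1 ∧ n = i + 1)) := by
    intro i hi x hx
    rcases Nat.eq_zero_or_pos i with h0 | h0
    · rw [hrim] at hx; simp only [h0, eq_self_iff_true, if_true] at hx
      rcases hx with hx | hx | hx
      · exact ⟨1, hx, by omega, Or.inl ⟨h0, Or.inl rfl⟩⟩
      · exact ⟨k + 2, hx, by omega, Or.inl ⟨h0, Or.inr (Or.inl rfl)⟩⟩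
      · exact ⟨k + 1, hx, by omega, Or.inl ⟨h0, Or.inr (Or.inr rfl)⟩⟩
    · by_cases h1 : i = k - 1
      · rw [hrim] at hx; simp only [if_neg (by omega : ¬ i = 0), if_pos h1] at hx
        rcases hx with hx | hx
        · exact ⟨k, hx, by omega, Or.inr (Or.inl ⟨h0, h1, Or.inl rfl⟩)⟩
        · exact ⟨2 * k + 1, hx, by omega, Or.inr (Or.inl ⟨h0, h1, Or.inr rfl⟩)⟩
      · rw [hrim] at hx; simp only [if_neg (by omega : ¬ i = 0), if_neg h1] at hx
        exact ⟨i + 1, hx, by omega, Or.inr (Or.inr ⟨h0, h1, rfl⟩)⟩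
  have hubmem : ∀ t, t ≤ k - 3 → a (k + 3 + t) ∈ (fun t => a (k + 3 + t)) '' Set.Iic (k - 3) :=
    fun t ht => ⟨t, by simp only [Set.mem_Iic]; omega, rfl⟩
  have hubchar : ∀ x ∈ (fun t => a (k + 3 + t)) '' Set.Iic (k - 3),
      ∃ t, t ≤ k - 3 ∧ x = a (k + 3 + t) := by
    rintro x ⟨t, ht, rfl⟩
    exact ⟨t, by simpa using ht, rfl⟩
  refine wheel_model hk _ ((fun t => a (k + 3 + t)) '' Set.Iic (k - 3)) rim
    ⟨a (k + 3), hubmem 0 (by omega)⟩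
    (induce_chain_connected _ (k - 3) (fun t _ => by exact adj1 (k + 3 + t)))
    ?_ ?_ ?_ ?_ ?_ ?_ ?_ ?_ ?_
  · intro x hx
    obtain ⟨t, ht, rfl⟩ := hubchar x hx
    simp only [Set.mem_compl_iff, Set.mem_singleton_iff]
    exact a_ne_t0 (k + 3 + t) (by omega) (by omega)
  · intro i hi; exact ⟨a (i + 1), mem1 i hi⟩
  · intro i hi
    rcases Nat.eq_zero_or_pos i with h0 | h0
    · have h1 : (Mgraph (k + 1)).Adj (a 1) (a (k + 2)) := by
        have := adj2 1; rwa [show 1 + (k + 1) = k + 2 by omega] at this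
      have h2 : (Mgraph (k + 1)).Adj (a (k + 2)) (a (k + 1)) := (adj1 (k + 1)).symm
      refine connected_congr ?_ (induce_triple_connected h1 h2)
      rw [hrim]; simp only [h0, eq_self_iff_true, if_true]
    · by_cases h1 : i = k - 1
      · have hp : (Mgraph (k + 1)).Adj (a k) (a (2 * k + 1)) := by
          have := adj2 k; rwa [show k + (k + 1) = 2 * k + 1 by omega] at this
        refine connected_congr ?_ (induce_pair_connected hp)
        rw [hrim]; simp only [if_neg (by omega : ¬ i = 0), if_pos h1]
      · refine connected_congr ?_ (induce_singleton_connected (a (i + 1)))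
        rw [hrim]; simp only [if_neg (by omega : ¬ i = 0), if_neg h1]
  · intro i hi x hx
    obtain ⟨n, rfl, hn, hcase⟩ := mem_rim i hi x hx
    simp only [Set.mem_compl_iff, Set.mem_singleton_iff]
    exact a_ne_t0 n (by omega) hn
  · intro i hi j hj hij
    rw [Set.disjoint_left]
    intro x hxi hxj
    obtain ⟨n, rfl, hn, hcase1⟩ := mem_rim i hi x hxi
    obtain ⟨n', hn'eq, hn', hcase2⟩ := mem_rim j hj _ hxj
    have := a_inj n hn n' hn' hn'eq
    omega
  · intro i hi
    rw [Set.disjoint_left]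
    intro x hx hxr
    obtain ⟨t, ht, rfl⟩ := hubchar x hx
    obtain ⟨n, hneq, hn, hcase⟩ := mem_rim i hi _ hxr
    have := a_inj (k + 3 + t) (by omega) n hn hneq
    omega
  · intro i hilt
    exact ⟨a (i + 1), mem1 i (by omega), a (i + 2), by simpa using mem1 (i + 1) hilt,
      by simpa using adj1 (i + 1)⟩
  · refine ⟨a k, ?_, a (k + 1), ?_, adj1 k⟩
    · have := mem1 (k - 1) (by omega)
      rwa [show k - 1 + 1 = k by omega] at this
    · rw [hrim]; simp only [eq_self_iff_true, if_true]; right; right; rfl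
  · intro i hi
    rcases Nat.eq_zero_or_pos i with h0 | h0
    · refine ⟨a (k + 3), hubmem 0 (by omega), a (k + 2), ?_, (adj1 (k + 2)).symm⟩
      rw [hrim]; simp only [h0, eq_self_iff_true, if_true]; right; left; rfl
    · by_cases h1 : i = k - 1
      · refine ⟨a (2 * k), ?_, a (2 * k + 1), ?_, adj1 (2 * k)⟩
        · have := hubmem (k - 3) (by omega)
          rwa [show k + 3 + (k - 3) = 2 * k by omega] at this
        · rw [hrim]; simp only [if_neg (by omega : ¬ i = 0), if_pos h1]; right; rfl
      · refine ⟨a (i + k + 2), ?_, a (i + 1), mem1 i hi, ?_⟩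
        · have := hubmem (i - 1) (by omega)
          rwa [show k + 3 + (i - 1) = i + k + 2 by omega] at this
        · have := (adj2 (i + 1)).symm
          rwa [show i + 1 + (k + 1) = i + k + 2 by omega] at this


/-- Assuming every finite 4-connected graph with at least `f₄ j` vertices contains
`D_j`, `O_j`, `M_j` or `K_{4,j}` as a minor (for all `j ≥ 3`), every finite 3-connected
graph with at least `f₄ (k+1) − 1` vertices contains `W_k` or `K_{3,k}` as a minor. -/
theorem stmt_13 (f4 : ℕ → ℕ) (k : ℕ) (hk : 3 ≤ k)
    (h4 : ∀ (j : ℕ), 3 ≤ j → ∀ (V : Type) [Fintype V] (G : SimpleGraph V),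
      KConnected G 4 → f4 j ≤ Fintype.card V →
        IsMinorOf (Dgraph j) G ∨ IsMinorOf (Ograph j) G ∨ IsMinorOf (Mgraph j) G ∨
          IsMinorOf (completeBipartiteGraph (Fin 4) (Fin j)) G) :
    ∀ (V : Type) [Fintype V] (G : SimpleGraph V),
      KConnected G 3 → f4 (k + 1) - 1 ≤ Fintype.card V →
        IsMinorOf (wheel k) G ∨
          IsMinorOf (completeBipartiteGraph (Fin 3) (Fin k)) G := by
  
  intro V _ G hG3 hcard
  haveI : NeZero (k + 1) := ⟨by omega⟩
  have h4c : KConnected (cone G) 4 := cone_kconnected hG3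
  have hcard' : f4 (k + 1) ≤ Fintype.card (Option V) := by
    rw [Fintype.card_option]; omega
  rcases h4 (k + 1) (by omega) (Option V) (cone G) h4c hcard' with ⟨B, hB⟩ | ⟨B, hB⟩ | ⟨B, hB⟩ | ⟨B, hB⟩
  · haveI : Nonempty (ZMod (k + 1) ⊕ Fin 2) := ⟨Sum.inr 0⟩
    obtain ⟨t0, hmod⟩ := cone_delete hB
    obtain ⟨C, hC, hCS⟩ := Dmodel hk t0
    exact Or.inl (hmod.comp hC hCS)
  · haveI : Nonempty (ZMod (k + 1) × ZMod 2) := ⟨(0, 0)⟩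
    obtain ⟨t0, hmod⟩ := cone_delete hB
    obtain ⟨C, hC, hCS⟩ := Omodel hk t0
    exact Or.inl (hmod.comp hC hCS)
  · haveI : Nonempty (ZMod (2 * (k + 1))) := ⟨0⟩
    obtain ⟨t0, hmod⟩ := cone_delete hB
    obtain ⟨C, hC, hCS⟩ := Mmodel hk t0
    exact Or.inl (hmod.comp hC hCS)
  · haveI : Nonempty (Fin 4 ⊕ Fin (k + 1)) := ⟨Sum.inl 0⟩
    obtain ⟨t0, hmod⟩ := cone_delete hB
    obtain ⟨C, hC, hCS⟩ := Kmodel k t0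
    exact Or.inr (hmod.comp hC hCS)
end

section
/- If G is a rayless k-connected (possibly infinite) graph and U ⊆ V(G) is finite, then there exists a finite k-connected subgraph H of G with U ⊆ V(H). -/
open SimpleGraph

/-- `G` contains a ray (a one-way infinite path) as a subgraph. -/
def HasRay {V : Type*} (G : SimpleGraph V) : Prop :=
  ∃ f : ℕ → V, Function.Injective f ∧ ∀ i, G.Adj (f i) (f (i + 1))

section Prelim
variable {V : Type} {G : SimpleGraph V}

/-- Reachability within a vertex set `A`. -/
def Reach (G : SimpleGraph V) (A : Set V) (a b : V) : Prop :=
  ∃ p : G.Walk a b, ∀ x ∈ p.support, x ∈ A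

namespace Reach

lemma refl {A : Set V} {a : V} (ha : a ∈ A) : Reach G A a a :=
  ⟨Walk.nil, by simp [ha]⟩

lemma left_mem {A : Set V} {a b : V} (h : Reach G A a b) : a ∈ A := by
  obtain ⟨p, hp⟩ := h; exact hp a p.start_mem_support

lemma right_mem {A : Set V} {a b : V} (h : Reach G A a b) : b ∈ A := by
  obtain ⟨p, hp⟩ := h; exact hp b p.end_mem_support

lemma symm {A : Set V} {a b : V} (h : Reach G A a b) : Reach G A b a := by
  obtain ⟨p, hp⟩ := h
  exact ⟨p.reverse, by intro x hx; rw [Walk.support_reverse, List.mem_reverse] at hx; exact hp x hx⟩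

lemma trans {A : Set V} {a b c : V} (h : Reach G A a b) (h' : Reach G A b c) :
    Reach G A a c := by
  obtain ⟨p, hp⟩ := h; obtain ⟨q, hq⟩ := h'
  refine ⟨p.append q, ?_⟩
  intro x hx
  rw [Walk.support_append] at hx
  rcases List.mem_append.1 hx with h1 | h1
  · exact hp x h1
  · exact hq x (List.mem_of_mem_tail h1)

lemma mono {A B : Set V} (hAB : A ⊆ B) {a b : V} (h : Reach G A a b) : Reach G B a b := by
  obtain ⟨p, hp⟩ := h; exact ⟨p, fun x hx => hAB (hp x hx)⟩

lemma adj {A : Set V} {a b : V} (h : G.Adj a b) (ha : a ∈ A) (hb : b ∈ A) : Reach G A a b :=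
  ⟨Walk.cons h Walk.nil, by intro x hx; simp at hx; rcases hx with rfl | rfl <;> assumption⟩

end Reach

lemma reach_of_mem_support {A : Set V} {a b y : V} (p : G.Walk a b)
    (hp : ∀ x ∈ p.support, x ∈ A) (hy : y ∈ p.support) : Reach G A a y := by
  classical
  exact ⟨p.takeUntil y hy, fun x hx => hp x (p.support_takeUntil_subset hy hx)⟩

/-- Exit lemma: if `a ≠ v` is connected to `v` within `A`, then `a` reaches a neighbour of `v`
within `A \ {v}`. -/
lemma exit_lemma {A : Set V} {a v : V} (hav : a ≠ v) (h : Reach G A a v) :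
    ∃ u, G.Adj v u ∧ Reach G (A \ {v}) a u := by
  obtain ⟨p, hp⟩ := h
  induction p with
  | nil => exact absurd rfl hav
  | @cons a c v h q ih =>
    simp only [Walk.support_cons] at hp
    have ha : a ∈ A := hp a (by simp)
    by_cases hcv : c = v
    · subst hcv
      exact ⟨a, h.symm, Reach.refl ⟨ha, hav⟩⟩
    · obtain ⟨u, hu, hru⟩ := ih hcv (fun x hx => hp x (by simp [hx]))
      refine ⟨u, hu, Reach.trans (Reach.adj h ⟨ha, hav⟩ ?_) hru⟩
      exact ⟨hp c (by simp), hcv⟩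

/-- `D` is a connected component of the vertex set `A`. -/
def IsCompOf (G : SimpleGraph V) (A D : Set V) : Prop :=
  ∃ d ∈ A, D = {x | Reach G A d x}

namespace IsCompOf

lemma subset {A D : Set V} (h : IsCompOf G A D) : D ⊆ A := by
  obtain ⟨d, hd, rfl⟩ := h
  exact fun x hx => Reach.right_mem hx

lemma nonempty {A D : Set V} (h : IsCompOf G A D) : D.Nonempty := by
  obtain ⟨d, hd, rfl⟩ := h
  exact ⟨d, Reach.refl hd⟩

lemma closed {A D : Set V} (h : IsCompOf G A D) {a y : V} (ha : a ∈ D)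
    (hr : Reach G A a y) : y ∈ D := by
  obtain ⟨d, hd, rfl⟩ := h
  exact Reach.trans ha hr

/-- A walk within `A` starting in `D` stays in `D`. -/
lemma support_subset {A D : Set V} (h : IsCompOf G A D) {a b : V} (ha : a ∈ D)
    (p : G.Walk a b) (hp : ∀ x ∈ p.support, x ∈ A) : ∀ x ∈ p.support, x ∈ D :=
  fun x hx => h.closed ha (reach_of_mem_support p hp hx)

lemma reach_in {A D : Set V} (h : IsCompOf G A D) {a b : V} (ha : a ∈ D) (hb : b ∈ D) :
    Reach G D a b := by
  obtain ⟨d, hd, rfl⟩ := h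
  obtain ⟨p, hp⟩ := (ha : Reach G A d a)
  obtain ⟨q, hq⟩ := (hb : Reach G A d b)
  have hD : IsCompOf G A {x | Reach G A d x} := ⟨d, hd, rfl⟩
  have hdD : d ∈ {x | Reach G A d x} := Reach.refl hd
  have h1 : Reach G {x | Reach G A d x} d a := ⟨p, hD.support_subset hdD p hp⟩
  have h2 : Reach G {x | Reach G A d x} d b := ⟨q, hD.support_subset hdD q hq⟩
  exact Reach.trans h1.symm h2

lemma eq_cls {A D : Set V} (h : IsCompOf G A D) {x : V} (hx : x ∈ D) :
    D = {y | Reach G A x y} := by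
  obtain ⟨d, hd, rfl⟩ := h
  ext y
  constructor
  · intro hy; exact Reach.trans (Reach.symm hx) hy
  · intro hy; exact Reach.trans hx hy

lemma eq_of_mem {A D D' : Set V} (h : IsCompOf G A D) (h' : IsCompOf G A D') {x : V}
    (hx : x ∈ D) (hx' : x ∈ D') : D = D' := by
  rw [h.eq_cls hx, h'.eq_cls hx']

lemma cls_isCompOf {A : Set V} {x : V} (hx : x ∈ A) : IsCompOf G A {y | Reach G A x y} :=
  ⟨x, hx, rfl⟩

lemma mem_cls {A : Set V} {x : V} (hx : x ∈ A) : x ∈ {y | Reach G A x y} := Reach.refl hx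

end IsCompOf

/-- `C` is connected (as a vertex set). -/
def SetConn (G : SimpleGraph V) (C : Set V) : Prop :=
  C.Nonempty ∧ ∀ a ∈ C, ∀ b ∈ C, Reach G C a b

lemma IsCompOf.setConn {A D : Set V} (h : IsCompOf G A D) : SetConn G D :=
  ⟨h.nonempty, fun a ha b hb => h.reach_in ha hb⟩

/-- Neighbour attachment: any component of `C \ {v}`, `v ∈ C`, `C` connected, contains a
neighbour of `v`. -/
lemma comp_attach {C D : Set V} (hC : SetConn G C) {v : V} (hv : v ∈ C)
    (hD : IsCompOf G (C \ {v}) D) : ∃ u ∈ D, G.Adj v u := by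
  obtain ⟨d, hd⟩ := hD.nonempty
  have hdC : d ∈ C \ {v} := hD.subset hd
  obtain ⟨u, hu, hru⟩ := exit_lemma (G := G) hdC.2 (hC.2 d hdC.1 v hv)
  exact ⟨u, hD.closed hd hru, hu⟩

/-- The rank predicate for rayless graphs. -/
inductive Rk (G : SimpleGraph V) : Set V → Prop
  | intro (C : Set V) (v : V) (hv : v ∈ C)
      (h : ∀ D, IsCompOf G (C \ {v}) D → Rk G D) : Rk G C

/-- Every connected set is ranked, in a rayless graph. -/
lemma rk_of_rayless (hray : ¬ ∃ f : ℕ → V, Function.Injective f ∧ ∀ i, G.Adj (f i) (f (i + 1)))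
    {C : Set V} (hC : SetConn G C) : Rk G C := by
  by_contra hbad
  let X := {p : V × Set V // p.1 ∈ p.2 ∧ SetConn G p.2 ∧ ¬ Rk G p.2}
  have step : ∀ x : X, ∃ y : X, y.1.2 ⊆ x.1.2 \ {x.1.1} ∧ G.Adj x.1.1 y.1.1 := by
    rintro ⟨⟨v, C⟩, hv, hconn, hrk⟩
    have h1 : ∃ D, IsCompOf G (C \ {v}) D ∧ ¬ Rk G D := by
      by_contra h2
      push_neg at h2
      exact hrk (Rk.intro C v hv h2)
    obtain ⟨D, hD, hDrk⟩ := h1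
    obtain ⟨u, huD, hadj⟩ := comp_attach hconn hv hD
    exact ⟨⟨(u, D), huD, hD.setConn, hDrk⟩, hD.subset, hadj⟩
  obtain ⟨v₀, hv₀⟩ := hC.1
  let x₀ : X := ⟨(v₀, C), hv₀, hC, hbad⟩
  let f : ℕ → X := fun n => Nat.rec x₀ (fun _ x => Classical.choose (step x)) n
  have hstep : ∀ n, (f (n+1)).1.2 ⊆ (f n).1.2 \ {(f n).1.1} ∧ G.Adj (f n).1.1 (f (n+1)).1.1 :=
    fun n => Classical.choose_spec (step (f n))
  have hnest : ∀ n m, n < m → (f m).1.2 ⊆ (f n).1.2 \ {(f n).1.1} := by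
    intro n m
    induction m with
    | zero => omega
    | succ m ih =>
      intro hnm
      rcases Nat.lt_succ_iff_lt_or_eq.1 hnm with h | h
      · exact ((hstep m).1.trans Set.diff_subset).trans (ih h)
      · rw [h]; exact (hstep m).1
  refine hray ⟨fun n => (f n).1.1, ?_, fun n => (hstep n).2⟩
  intro i j hij
  have hij' : (f i).1.1 = (f j).1.1 := hij
  rcases Nat.lt_trichotomy i j with h | h | h
  · have hmem := (hnest i j h) (f j).2.1
    rw [hij'] at hmem
    exact absurd rfl hmem.2
  · exact h
  · have hmem := (hnest j i h) (f i).2.1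
    rw [← hij'] at hmem
    exact absurd rfl hmem.2

lemma exists_avoid {k : ℕ} {𝒟 : Set (Set V)} (hk : 𝒟.ncard = k)
    (hdisj : ∀ D₁ ∈ 𝒟, ∀ D₂ ∈ 𝒟, D₁ ≠ D₂ → D₁ ∩ D₂ = ∅)
    {S : Set V} (hS : S.Finite) (hSk : S.ncard < k) : ∃ D ∈ 𝒟, S ∩ D = ∅ := by
  by_contra h
  push_neg at h
  have hne : ∀ D : 𝒟, (S ∩ (D : Set V)).Nonempty := fun ⟨D, hD⟩ => h D hD
  choose g hg using hne
  have hginj : Function.Injective fun D : 𝒟 => (⟨g D, (hg D).1⟩ : S) := by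
    intro D₁ D₂ h12
    simp only [Subtype.mk_eq_mk] at h12
    by_contra hne'
    have hne2 : (D₁ : Set V) ≠ D₂ := fun hh => hne' (Subtype.ext hh)
    have hd := hdisj D₁ D₁.2 D₂ D₂.2 hne2
    have hmem : g D₁ ∈ (D₁ : Set V) ∩ (D₂ : Set V) := ⟨(hg D₁).2, h12 ▸ (hg D₂).2⟩
    rw [hd] at hmem
    exact hmem
  have hle : Nat.card 𝒟 ≤ Nat.card S := by
    have := hS.to_subtype
    exact Nat.card_le_card_of_injective _ hginj
  rw [Nat.card_coe_set_eq, Nat.card_coe_set_eq, hk] at hle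
  omega

lemma exists_capped (ℱ : Set (Set V)) (k : ℕ) :
    ∃ E, E ⊆ ℱ ∧ E.Finite ∧ (ℱ ⊆ E ∨ E.ncard = k) := by
  by_cases hfin : ℱ.Finite
  · by_cases hcard : k ≤ ℱ.ncard
    · obtain ⟨E, hE, hEcard⟩ := Set.exists_subset_card_eq hcard
      exact ⟨E, hE, hfin.subset hE, Or.inr hEcard⟩
    · exact ⟨ℱ, le_refl _, hfin, Or.inl (le_refl _)⟩
  · obtain ⟨E, hE, hEfin, hEcard⟩ := Set.Infinite.exists_subset_ncard_eq hfin k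
    exact ⟨E, hE, hEfin, Or.inr hEcard⟩

end Prelim

section Main
variable {V : Type} {G : SimpleGraph V}


lemma lemmaE (k : ℕ) : ∀ C : Set V, Rk G C →
    ∀ (n : ℕ) (A : Fin n → Set V) (U : Set V), U.Finite → U ⊆ C →
    ∃ W : Set V, W.Finite ∧ U ⊆ W ∧ W ⊆ C ∧
      ∀ S : Set V, S ⊆ W → S.ncard < k →
        (∀ a ∈ W \ S, ∀ b ∈ W \ S, Reach G (C \ S) a b → Reach G (W \ S) a b) ∧
        (∀ a ∈ W \ S, ∀ i : Fin n, ∀ t, t ∈ A i → t ∉ S → Reach G (C \ S) a t →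
            ∃ t', t' ∈ (A i ∩ W) \ S ∧ Reach G (W \ S) a t') ∧
        (∀ i j : Fin n, ∀ s t, s ∈ A i → t ∈ A j → s ∉ S → t ∉ S → Reach G (C \ S) s t →
            ∃ s' t', s' ∈ (A i ∩ W) \ S ∧ t' ∈ (A j ∩ W) \ S ∧ Reach G (W \ S) s' t') := by
  intro C hC
  induction hC with
  | intro C v hv hcomp IH =>
  intro n A U hUfin hUC
  classical
  set A' := C \ {v} with hA'
  set B : Fin (n + 1) → Set V := Fin.cons (G.neighborSet v) A with hB
  have hB0 : B 0 = G.neighborSet v := rfl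
  have hBsucc : ∀ i : Fin n, B i.succ = A i := fun i => by
    simp only [hB, Fin.cons_succ]
  -- families of components joining two marks
  set F : Fin (n + 1) → Fin (n + 1) → Set (Set V) := fun p q =>
    {D | IsCompOf G A' D ∧ (D ∩ B p).Nonempty ∧ (D ∩ B q).Nonempty} with hF
  choose E hEsub hEfin hEalt using fun p q => exists_capped (F p q) k
  -- seeds
  have hTex : ∀ p q : Fin (n + 1), ∀ D : Set V, ∃ T : Set V, T.Finite ∧
      (D ∈ F p q → T ⊆ D ∧ ∃ x ∈ T ∩ B p, ∃ y ∈ T ∩ B q, Reach G T x y) := by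
    intro p q D
    by_cases hD : D ∈ F p q
    · obtain ⟨hcompD, ⟨x, hxD, hxB⟩, ⟨y, hyD, hyB⟩⟩ := hD
      obtain ⟨pw, hpw⟩ := hcompD.reach_in hxD hyD
      refine ⟨{z | z ∈ pw.support}, pw.support.finite_toSet, fun _ => ⟨?_, x,
        ⟨pw.start_mem_support, hxB⟩, y, ⟨pw.end_mem_support, hyB⟩, pw, fun z hz => hz⟩⟩
      exact fun z hz => hpw z hz
    · exact ⟨∅, Set.finite_empty, fun h => absurd h hD⟩
  choose T hTfin hTspec using hTex
  -- the finite collection of relevant components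
  set DU : Set (Set V) := {D | IsCompOf G A' D ∧ (D ∩ U).Nonempty} with hDU
  set 𝒟 : Set (Set V) := DU ∪ ⋃ p, ⋃ q, E p q with h𝒟
  have h𝒟comp : ∀ D ∈ 𝒟, IsCompOf G A' D := by
    intro D hD
    rcases hD with hD | hD
    · exact hD.1
    · simp only [Set.mem_iUnion] at hD
      obtain ⟨p, q, hpq⟩ := hD
      exact (hEsub p q hpq).1
  have hDUfin : DU.Finite := by
    apply (hUfin.image (fun u => {x | Reach G A' u x})).subset
    rintro D ⟨hcompD, u, huD, huU⟩
    exact ⟨u, huU, (hcompD.eq_cls huD).symm⟩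
  have h𝒟fin : 𝒟.Finite :=
    hDUfin.union (Set.finite_iUnion fun p => Set.finite_iUnion fun q => hEfin p q)
  -- seeds collected per component
  set UD : Set V → Set V := fun D =>
    (U ∩ D) ∪ ⋃ p, ⋃ q, (if D ∈ E p q then T p q D else ∅) with hUD
  have hUDfin : ∀ D, (UD D).Finite := by
    intro D
    refine (hUfin.inter_of_left D).union (Set.finite_iUnion fun p => Set.finite_iUnion fun q => ?_)
    split
    · exact hTfin p q D
    · exact Set.finite_empty
  have hUDsub : ∀ D ∈ 𝒟, UD D ⊆ D := by
    intro D hD x hx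
    rcases hx with hx | hx
    · exact hx.2
    · simp only [Set.mem_iUnion] at hx
      obtain ⟨p, q, hpq⟩ := hx
      split at hpq
      · exact (hTspec p q D (hEsub p q ‹D ∈ E p q›)).1 hpq
      · exact absurd hpq (Set.notMem_empty x)
  have hTsubUD : ∀ p q D, D ∈ E p q → T p q D ⊆ UD D := by
    intro p q D hD x hx
    refine Or.inr ?_
    simp only [Set.mem_iUnion]
    exact ⟨p, q, by rw [if_pos hD]; exact hx⟩
  -- apply the induction hypothesis to each relevant component
  have hWex : ∀ D : Set V, ∃ WD : Set V, D ∈ 𝒟 →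
      WD.Finite ∧ UD D ⊆ WD ∧ WD ⊆ D ∧
      ∀ S : Set V, S ⊆ WD → S.ncard < k →
        (∀ a ∈ WD \ S, ∀ b ∈ WD \ S, Reach G (D \ S) a b → Reach G (WD \ S) a b) ∧
        (∀ a ∈ WD \ S, ∀ i : Fin (n+1), ∀ t, t ∈ B i → t ∉ S → Reach G (D \ S) a t →
            ∃ t', t' ∈ (B i ∩ WD) \ S ∧ Reach G (WD \ S) a t') ∧
        (∀ i j : Fin (n+1), ∀ s t, s ∈ B i → t ∈ B j → s ∉ S → t ∉ S → Reach G (D \ S) s t →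
            ∃ s' t', s' ∈ (B i ∩ WD) \ S ∧ t' ∈ (B j ∩ WD) \ S ∧ Reach G (WD \ S) s' t') := by
    intro D
    by_cases hD : D ∈ 𝒟
    · obtain ⟨WD, h1, h2, h3, h4⟩ :=
        IH D (h𝒟comp D hD) (n + 1) B (UD D) (hUDfin D) (hUDsub D hD)
      exact ⟨WD, fun _ => ⟨h1, h2, h3, h4⟩⟩
    · exact ⟨∅, fun h => absurd h hD⟩
  choose WD hWD using hWex
  set W : Set V := insert v (⋃ D ∈ 𝒟, WD D) with hW
  have hvW : v ∈ W := Set.mem_insert _ _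
  have hWDD : ∀ D ∈ 𝒟, WD D ⊆ D := fun D hD => (hWD D hD).2.2.1
  have hvD : ∀ D ∈ 𝒟, v ∉ D := by
    intro D hD hvd
    exact ((h𝒟comp D hD).subset hvd).2 rfl
  have hmemW : ∀ a ∈ W, a = v ∨ ∃ D ∈ 𝒟, a ∈ WD D := by
    intro a ha
    rcases ha with ha | ha
    · exact Or.inl ha
    · simp only [Set.mem_iUnion] at ha
      obtain ⟨D, hD, haD⟩ := ha
      exact Or.inr ⟨D, hD, haD⟩
  have hWsubC : W ⊆ C := by
    intro x hx
    rcases hmemW x hx with rfl | ⟨D, hD, hxD⟩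
    · exact hv
    · exact (((h𝒟comp D hD).subset) (hWDD D hD hxD)).1
  have hWDsubW : ∀ D ∈ 𝒟, WD D ⊆ W := by
    intro D hD x hx
    exact Set.mem_insert_iff.2 (Or.inr (Set.mem_biUnion hD hx))
  refine ⟨W, ?_, ?_, hWsubC, ?_⟩
  · exact (Set.Finite.biUnion h𝒟fin fun D hD => (hWD D hD).1).insert v
  · -- U ⊆ W
    intro u hu
    by_cases huv : u = v
    · exact huv ▸ hvW
    · have huA' : u ∈ A' := ⟨hUC hu, huv⟩
      have hcls : IsCompOf G A' {x | Reach G A' u x} := IsCompOf.cls_isCompOf huA'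
      have hclsDU : {x | Reach G A' u x} ∈ 𝒟 :=
        Or.inl ⟨hcls, ⟨u, IsCompOf.mem_cls huA', hu⟩⟩
      exact hWDsubW _ hclsDU ((hWD _ hclsDU).2.1 (Or.inl ⟨hu, IsCompOf.mem_cls huA'⟩))
  intro S hSW hSk
  have hSfin : S.Finite := ((Set.Finite.biUnion h𝒟fin fun D hD => (hWD D hD).1).insert v).subset hSW
  have hSD : ∀ D ∈ 𝒟, S ∩ D ⊆ WD D := by
    intro D hD x hx
    rcases hmemW x (hSW hx.1) with rfl | ⟨D', hD', hxD'⟩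
    · exact absurd hx.2 (hvD D hD)
    · have : D' = D := (h𝒟comp D' hD').eq_of_mem (h𝒟comp D hD) (hWDD D' hD' hxD') hx.2
      exact this ▸ hxD'
  have hSDcard : ∀ D : Set V, (S ∩ D).ncard < k :=
    fun D => lt_of_le_of_lt (Set.ncard_le_ncard Set.inter_subset_left hSfin) hSk
  have hlift : ∀ D ∈ 𝒟, WD D \ (S ∩ D) ⊆ W \ S := by
    intro D hD x hx
    refine ⟨hWDsubW D hD hx.1, fun hxS => hx.2 ⟨hxS, hWDD D hD hx.1⟩⟩
  have houtside : ∀ D : Set V, IsCompOf G A' D → D ∉ 𝒟 → S ∩ D = ∅ := by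
    intro D hDcomp hD𝒟
    rw [Set.eq_empty_iff_forall_notMem]
    intro x hx
    rcases hmemW x (hSW hx.1) with rfl | ⟨D', hD', hxD'⟩
    · exact (hDcomp.subset hx.2).2 rfl
    · exact hD𝒟 (((h𝒟comp D' hD').eq_of_mem hDcomp (hWDD D' hD' hxD') hx.2) ▸ hD')
  have hstay : ∀ D : Set V, IsCompOf G A' D → ∀ a b : V, a ∈ D → Reach G (A' \ S) a b →
      b ∈ D ∧ Reach G (D \ (S ∩ D)) a b := by
    intro D hDcomp a b haD hr
    obtain ⟨p, hp⟩ := hr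
    have hsub : ∀ x ∈ p.support, x ∈ D :=
      hDcomp.support_subset haD p (fun x hx => (hp x hx).1)
    exact ⟨hsub b p.end_mem_support,
      ⟨p, fun x hx => ⟨hsub x hx, fun hc => (hp x hx).2 hc.1⟩⟩⟩
  have hsetdd : (C \ S) \ {v} = A' \ S := by rw [hA', Set.diff_diff_comm]
  have hEdisj : ∀ p q : Fin (n+1), ∀ D₁ ∈ E p q, ∀ D₂ ∈ E p q, D₁ ≠ D₂ → D₁ ∩ D₂ = ∅ := by
    intro p q D₁ h1 D₂ h2 hne
    rw [Set.eq_empty_iff_forall_notMem]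
    intro x hx
    exact hne (((hEsub p q h1).1).eq_of_mem ((hEsub p q h2).1) hx.1 hx.2)
  have hEin𝒟 : ∀ p q : Fin (n+1), E p q ⊆ 𝒟 := by
    intro p q D hD
    refine Or.inr ?_
    simp only [Set.mem_iUnion]
    exact ⟨p, q, hD⟩
  -- the counting argument, packaged: if a component outside 𝒟 joins marks p,q then
  -- W contains a protected p–q connection
  have hcount : ∀ p q : Fin (n+1), ∀ D' : Set V, IsCompOf G A' D' → D' ∉ 𝒟 →
      D' ∈ F p q →
      ∃ x' y', x' ∈ (B p ∩ W) \ S ∧ y' ∈ (B q ∩ W) \ S ∧ Reach G (W \ S) x' y' := by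
    intro p q D' hD'comp hD'𝒟 hD'F
    have hnotsub : ¬ F p q ⊆ E p q := fun hsub => hD'𝒟 (hEin𝒟 p q (hsub hD'F))
    have hkcard : (E p q).ncard = k := (hEalt p q).resolve_left hnotsub
    obtain ⟨Dst, hDstE, hDstS⟩ := exists_avoid hkcard (hEdisj p q) hSfin hSk
    have hDst𝒟 : Dst ∈ 𝒟 := hEin𝒟 p q hDstE
    obtain ⟨hTsub, x, ⟨hxT, hxB⟩, y, ⟨hyT, hyB⟩, hxy⟩ := hTspec p q Dst (hEsub p q hDstE)
    have hTW : T p q Dst ⊆ WD Dst \ (S ∩ Dst) := by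
      intro z hz
      refine ⟨(hWD Dst hDst𝒟).2.1 (hTsubUD p q Dst hDstE hz), fun hc => ?_⟩
      rw [hDstS] at hc
      exact hc
    have hxW : x ∈ W \ S := hlift Dst hDst𝒟 (hTW hxT)
    have hyW : y ∈ W \ S := hlift Dst hDst𝒟 (hTW hyT)
    exact ⟨x, y, ⟨⟨hxB, hxW.1⟩, hxW.2⟩, ⟨⟨hyB, hyW.1⟩, hyW.2⟩,
      (hxy.mono (hTW.trans (hlift Dst hDst𝒟)))⟩
  -- Claim A
  have claimA : ∀ a ∈ W \ S, v ∉ S → Reach G (C \ S) a v → Reach G (W \ S) a v := by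
    intro a haW hvS hr
    by_cases hav : a = v
    · subst hav; exact Reach.refl ⟨hvW, hvS⟩
    · obtain ⟨u, hadj, hru⟩ := exit_lemma hav hr
      rw [hsetdd] at hru
      rcases hmemW a haW.1 with rfl | ⟨D, hD𝒟, haWD⟩
      · exact absurd rfl hav
      have haD : a ∈ D := hWDD D hD𝒟 haWD
      have huS : u ∉ S := (Reach.right_mem hru).2
      obtain ⟨huD, hruD⟩ := hstay D (h𝒟comp D hD𝒟) a u haD hru
      obtain ⟨-, hii, -⟩ := (hWD D hD𝒟).2.2.2 (S ∩ D) (hSD D hD𝒟) (hSDcard D)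
      obtain ⟨t', ⟨⟨ht'B, ht'WD⟩, ht'S⟩, hrt'⟩ :=
        hii a ⟨haWD, fun hc => haW.2 hc.1⟩ 0 u (by rw [hB0]; exact hadj)
          (fun hc => huS hc.1) hruD
      have ht'W : t' ∈ W \ S := hlift D hD𝒟 ⟨ht'WD, ht'S⟩
      refine Reach.trans (hrt'.mono (hlift D hD𝒟)) (Reach.adj ?_ ht'W ⟨hvW, hvS⟩)
      exact (by rwa [hB0] at ht'B : G.Adj v t').symm
  -- Claim B
  have claimB : ∀ p : Fin (n+1), v ∉ S → ∀ t, t ∈ B p → t ∉ S → Reach G (C \ S) v t →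
      ∃ t', t' ∈ (B p ∩ W) \ S ∧ Reach G (W \ S) v t' := by
    intro p hvS t htB htS hr
    by_cases htv : t = v
    · subst htv
      exact ⟨t, ⟨⟨htB, hvW⟩, htS⟩, Reach.refl ⟨hvW, hvS⟩⟩
    · obtain ⟨u, hadj, hru⟩ := exit_lemma htv hr.symm
      rw [hsetdd] at hru
      have htA' : t ∈ A' \ S := Reach.left_mem hru
      have hD'comp : IsCompOf G A' {x | Reach G A' t x} := IsCompOf.cls_isCompOf htA'.1
      have htD' : t ∈ {x | Reach G A' t x} := IsCompOf.mem_cls htA'.1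
      have huS : u ∉ S := (Reach.right_mem hru).2
      obtain ⟨huD', hruD'⟩ := hstay _ hD'comp t u htD' hru
      by_cases hD'𝒟 : {x | Reach G A' t x} ∈ 𝒟
      · obtain ⟨-, -, hiii⟩ := (hWD _ hD'𝒟).2.2.2 (S ∩ _) (hSD _ hD'𝒟) (hSDcard _)
        obtain ⟨s', u', ⟨⟨hs'B, hs'WD⟩, hs'S⟩, ⟨⟨hu'B, hu'WD⟩, hu'S⟩, hru'⟩ :=
          hiii p 0 t u htB (by rw [hB0]; exact hadj) (fun hc => htS hc.1)
            (fun hc => huS hc.1) hruD'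
        have hs'W : s' ∈ W \ S := hlift _ hD'𝒟 ⟨hs'WD, hs'S⟩
        have hu'W : u' ∈ W \ S := hlift _ hD'𝒟 ⟨hu'WD, hu'S⟩
        refine ⟨s', ⟨⟨hs'B, hs'W.1⟩, hs'W.2⟩, ?_⟩
        refine Reach.trans (Reach.adj ?_ ⟨hvW, hvS⟩ hu'W) ((hru'.mono (hlift _ hD'𝒟)).symm)
        exact (by rwa [hB0] at hu'B : G.Adj v u')
      · have hD'F : {x | Reach G A' t x} ∈ F p 0 :=
          ⟨hD'comp, ⟨t, htD', htB⟩, ⟨u, huD', by rw [hB0]; exact hadj⟩⟩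
        obtain ⟨x', y', hx', hy', hr'⟩ := hcount p 0 _ hD'comp hD'𝒟 hD'F
        refine ⟨x', hx', ?_⟩
        have : G.Adj v y' := by rw [hB0] at hy'; exact hy'.1.1
        exact Reach.trans (Reach.adj this ⟨hvW, hvS⟩ ⟨hy'.1.2, hy'.2⟩) hr'.symm
  refine ⟨?_, ?_, ?_⟩
  · -- clause (i)
    intro a haW b hbW hr
    obtain ⟨p, hp⟩ := hr
    by_cases hvsup : v ∈ p.support
    · have hvS : v ∉ S := (hp v hvsup).2
      have h1 : Reach G (C \ S) a v := reach_of_mem_support p hp hvsup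
      have h2 : Reach G (C \ S) b v := by
        refine reach_of_mem_support p.reverse ?_ ?_
        · intro x hx
          rw [Walk.support_reverse, List.mem_reverse] at hx
          exact hp x hx
        · rw [Walk.support_reverse, List.mem_reverse]; exact hvsup
      exact Reach.trans (claimA a haW hvS h1) (claimA b hbW hvS h2).symm
    · have hsup' : ∀ x ∈ p.support, x ∈ A' \ S := fun x hx =>
        ⟨⟨(hp x hx).1, fun he => hvsup (he ▸ hx)⟩, (hp x hx).2⟩
      have hab : Reach G (A' \ S) a b := ⟨p, hsup'⟩
      have hav : a ≠ v := fun h => hvsup (h ▸ p.start_mem_support)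
      rcases hmemW a haW.1 with rfl | ⟨D, hD𝒟, haWD⟩
      · exact absurd rfl hav
      obtain ⟨hbD, hrD⟩ := hstay D (h𝒟comp D hD𝒟) a b (hWDD D hD𝒟 haWD) hab
      have hbWD : b ∈ WD D := by
        rcases hmemW b hbW.1 with rfl | ⟨D', hD'𝒟, hbWD'⟩
        · exact absurd hbD (hvD D hD𝒟)
        · have : D' = D := (h𝒟comp D' hD'𝒟).eq_of_mem (h𝒟comp D hD𝒟) (hWDD D' hD'𝒟 hbWD') hbD
          exact this ▸ hbWD'
      obtain ⟨hi, -, -⟩ := (hWD D hD𝒟).2.2.2 (S ∩ D) (hSD D hD𝒟) (hSDcard D)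
      exact (hi a ⟨haWD, fun hc => haW.2 hc.1⟩ b ⟨hbWD, fun hc => hbW.2 hc.1⟩ hrD).mono
        (hlift D hD𝒟)
  · -- clause (ii)
    intro a haW i t htA htS hr
    obtain ⟨p, hp⟩ := hr
    by_cases hvsup : v ∈ p.support
    · have hvS : v ∉ S := (hp v hvsup).2
      have h1 : Reach G (C \ S) a v := reach_of_mem_support p hp hvsup
      have h2 : Reach G (C \ S) v t := by
        refine (reach_of_mem_support p.reverse ?_ ?_).symm
        · intro x hx
          rw [Walk.support_reverse, List.mem_reverse] at hx
          exact hp x hx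
        · rw [Walk.support_reverse, List.mem_reverse]; exact hvsup
      obtain ⟨t', ht', hrt'⟩ := claimB i.succ hvS t (by rw [hBsucc]; exact htA) htS h2
      rw [hBsucc] at ht'
      exact ⟨t', ht', Reach.trans (claimA a haW hvS h1) hrt'⟩
    · have hsup' : ∀ x ∈ p.support, x ∈ A' \ S := fun x hx =>
        ⟨⟨(hp x hx).1, fun he => hvsup (he ▸ hx)⟩, (hp x hx).2⟩
      have hat : Reach G (A' \ S) a t := ⟨p, hsup'⟩
      have hav : a ≠ v := fun h => hvsup (h ▸ p.start_mem_support)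
      rcases hmemW a haW.1 with rfl | ⟨D, hD𝒟, haWD⟩
      · exact absurd rfl hav
      obtain ⟨htD, hrD⟩ := hstay D (h𝒟comp D hD𝒟) a t (hWDD D hD𝒟 haWD) hat
      obtain ⟨-, hii, -⟩ := (hWD D hD𝒟).2.2.2 (S ∩ D) (hSD D hD𝒟) (hSDcard D)
      obtain ⟨t', ⟨⟨ht'B, ht'WD⟩, ht'S⟩, hrt'⟩ :=
        hii a ⟨haWD, fun hc => haW.2 hc.1⟩ i.succ t (by rw [hBsucc]; exact htA)
          (fun hc => htS hc.1) hrD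
      have ht'W : t' ∈ W \ S := hlift D hD𝒟 ⟨ht'WD, ht'S⟩
      rw [hBsucc] at ht'B
      exact ⟨t', ⟨⟨ht'B, ht'W.1⟩, ht'W.2⟩, hrt'.mono (hlift D hD𝒟)⟩
  · -- clause (iii)
    intro i j s t hsA htA hsS htS hr
    obtain ⟨p, hp⟩ := hr
    by_cases hvsup : v ∈ p.support
    · have hvS : v ∉ S := (hp v hvsup).2
      have h1 : Reach G (C \ S) v s := (reach_of_mem_support p hp hvsup).symm
      have h2 : Reach G (C \ S) v t := by
        refine (reach_of_mem_support p.reverse ?_ ?_).symm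
        · intro x hx
          rw [Walk.support_reverse, List.mem_reverse] at hx
          exact hp x hx
        · rw [Walk.support_reverse, List.mem_reverse]; exact hvsup
      obtain ⟨s', hs', hrs'⟩ := claimB i.succ hvS s (by rw [hBsucc]; exact hsA) hsS h1
      obtain ⟨t', ht', hrt'⟩ := claimB j.succ hvS t (by rw [hBsucc]; exact htA) htS h2
      rw [hBsucc] at hs' ht'
      exact ⟨s', t', hs', ht', Reach.trans hrs'.symm hrt'⟩
    · have hsup' : ∀ x ∈ p.support, x ∈ A' \ S := fun x hx =>
        ⟨⟨(hp x hx).1, fun he => hvsup (he ▸ hx)⟩, (hp x hx).2⟩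
      have hst : Reach G (A' \ S) s t := ⟨p, hsup'⟩
      have hsA' : s ∈ A' \ S := Reach.left_mem hst
      have hD'comp : IsCompOf G A' {x | Reach G A' s x} := IsCompOf.cls_isCompOf hsA'.1
      have hsD' : s ∈ {x | Reach G A' s x} := IsCompOf.mem_cls hsA'.1
      obtain ⟨htD', hrD'⟩ := hstay _ hD'comp s t hsD' hst
      by_cases hD'𝒟 : {x | Reach G A' s x} ∈ 𝒟
      · obtain ⟨-, -, hiii⟩ := (hWD _ hD'𝒟).2.2.2 (S ∩ _) (hSD _ hD'𝒟) (hSDcard _)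
        obtain ⟨s', t', ⟨⟨hs'B, hs'WD⟩, hs'S⟩, ⟨⟨ht'B, ht'WD⟩, ht'S⟩, hr'⟩ :=
          hiii i.succ j.succ s t (by rw [hBsucc]; exact hsA) (by rw [hBsucc]; exact htA)
            (fun hc => hsS hc.1) (fun hc => htS hc.1) hrD'
        have hs'W : s' ∈ W \ S := hlift _ hD'𝒟 ⟨hs'WD, hs'S⟩
        have ht'W : t' ∈ W \ S := hlift _ hD'𝒟 ⟨ht'WD, ht'S⟩
        rw [hBsucc] at hs'B ht'B
        exact ⟨s', t', ⟨⟨hs'B, hs'W.1⟩, hs'W.2⟩, ⟨⟨ht'B, ht'W.1⟩, ht'W.2⟩,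
          hr'.mono (hlift _ hD'𝒟)⟩
      · have hD'F : {x | Reach G A' s x} ∈ F i.succ j.succ :=
          ⟨hD'comp, ⟨s, hsD', by rw [hBsucc]; exact hsA⟩, ⟨t, htD', by rw [hBsucc]; exact htA⟩⟩
        obtain ⟨x', y', hx', hy', hr'⟩ := hcount i.succ j.succ _ hD'comp hD'𝒟 hD'F
        rw [hBsucc] at hx'
        rw [hBsucc] at hy'
        exact ⟨x', y', hx', hy', hr'⟩
end Main

section Final
variable {V : Type} {G : SimpleGraph V}

lemma reach_of_induce_reachable {A : Set V} {a b : ↥A} (h : (G.induce A).Reachable a b) :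
    Reach G A ↑a ↑b := by
  obtain ⟨p⟩ := h
  induction p with
  | @nil u => exact Reach.refl u.2
  | @cons x c y h q ih => exact Reach.trans (Reach.adj (comap_adj.mp h) x.2 c.2) ih

lemma lift_reach {W S : Set V} {s : Set ↥W} (hmem : ∀ x : ↥W, x ∈ s ↔ (x : V) ∈ S)
    {H : SimpleGraph ↥W} (hH : ∀ x y : ↥W, G.Adj ↑x ↑y → H.Adj x y) :
    ∀ {a b : V}, Reach G (W \ S) a b →
    ∀ (x y : ↥(sᶜ)), ((x : ↥W) : V) = a → ((y : ↥W) : V) = b →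
    (H.induce sᶜ).Reachable x y := by
  intro a b ⟨p, hp⟩
  induction p with
  | nil =>
    intro x y hx hy
    have : x = y := by
      apply Subtype.ext; apply Subtype.ext; rw [hx, hy]
    exact this ▸ Reachable.refl x
  | @cons a c b h q ih =>
    intro x y hx hy
    have hc : c ∈ W \ S := hp c (by simp)
    have hcs : (⟨c, hc.1⟩ : ↥W) ∈ sᶜ := by
      intro hcel
      exact hc.2 ((hmem _).mp hcel)
    have hadj : G.Adj ((x : ↥W) : V) c := by rw [hx]; exact h
    exact Reachable.trans
      (Adj.reachable (u := x) (v := ⟨⟨c, hc.1⟩, hcs⟩) (comap_adj.mpr (hH _ _ hadj)))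
      (ih (fun z hz => hp z (by simp [hz])) _ y rfl hy)

theorem stmt_15' {V : Type} [Countable V] (G : SimpleGraph V) (k : ℕ)
    (hrayless : ¬ ∃ f : ℕ → V, Function.Injective f ∧ ∀ i, G.Adj (f i) (f (i + 1)))
    (hconn : (k < Nat.card V ∨ Infinite V) ∧
      ∀ s : Set V, s.Finite → s.ncard < k → (G.induce sᶜ).Connected)
    (U : Set V) (hU : U.Finite) :
    ∃ H : G.Subgraph, H.verts.Finite ∧ U ⊆ H.verts ∧
      ((k < Nat.card H.verts ∨ Infinite H.verts) ∧
       ∀ s : Set ↥H.verts, s.Finite → s.ncard < k → (H.coe.induce sᶜ).Connected) := by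
  classical
  rcases Nat.eq_zero_or_pos k with rfl | hk
  · -- trivial case k = 0
    have hne : Nonempty V := by
      rcases hconn.1 with h | h
      · exact Nat.card_pos_iff.mp h |>.1
      · exact h.nonempty
    obtain ⟨v⟩ := hne
    refine ⟨(⊤ : G.Subgraph).induce (insert v U), (hU.insert v), Set.subset_insert _ _, ?_, ?_⟩
    · left
      rw [Subgraph.induce_verts, Nat.card_coe_set_eq]
      exact Set.ncard_pos (hU.insert v) |>.mpr ⟨v, Set.mem_insert _ _⟩
    · intro s _ hs
      omega
  -- main case k ≥ 1
  have hGconn : (G.induce (∅ᶜ : Set V)).Connected := hconn.2 ∅ Set.finite_empty (by simpa)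
  have hVne : Nonempty V := by
    obtain ⟨⟨x, -⟩⟩ := hGconn.nonempty
    exact ⟨x⟩
  have hSetConn : SetConn G Set.univ := by
    refine ⟨⟨Classical.arbitrary V, trivial⟩, fun a _ b _ => ?_⟩
    have hr := hGconn.preconnected ⟨a, by simp⟩ ⟨b, by simp⟩
    exact (reach_of_induce_reachable hr).mono (Set.subset_univ _)
  have hRk : Rk G Set.univ := rk_of_rayless hrayless hSetConn
  -- pad U with k+1 vertices
  have hpad : ∃ U₂ : Set V, U₂.Finite ∧ U₂.ncard = k + 1 := by
    rcases hconn.1 with h | h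
    · haveI : Finite V := (Nat.card_pos_iff.mp (lt_of_le_of_lt (Nat.zero_le k) h)).2
      obtain ⟨t, -, htc⟩ := Set.exists_subset_card_eq
        (n := k + 1) (s := (Set.univ : Set V)) (by rw [Set.ncard_univ]; exact h)
      exact ⟨t, t.toFinite, htc⟩
    · haveI := h
      obtain ⟨t, -, htf, htc⟩ := Set.Infinite.exists_subset_ncard_eq
        (Set.infinite_univ (α := V)) (k + 1)
      exact ⟨t, htf, htc⟩
  obtain ⟨U₂, hU₂fin, hU₂card⟩ := hpad
  obtain ⟨W, hWfin, hUW, -, hprop⟩ := lemmaE k Set.univ hRk 0 (fun i => i.elim0)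
    (U ∪ U₂) (hU.union hU₂fin) (Set.subset_univ _)
  have hWcard : k + 1 ≤ W.ncard := by
    rw [← hU₂card]
    exact Set.ncard_le_ncard ((Set.subset_union_right).trans hUW) hWfin
  refine ⟨(⊤ : G.Subgraph).induce W, hWfin, Set.subset_union_left.trans hUW |>.trans ?_, ?_, ?_⟩
  · rw [Subgraph.induce_verts]
  · left
    rw [Subgraph.induce_verts, Nat.card_coe_set_eq]
    omega
  · intro s hsfin hscard
    set S : Set V := Subtype.val '' s with hS
    have hmem : ∀ x : ↥W, x ∈ s ↔ (x : V) ∈ S := by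
      intro x
      constructor
      · intro h; exact ⟨x, h, rfl⟩
      · rintro ⟨y, hy, hval⟩
        rwa [Subtype.val_injective hval] at hy
    have hSfin : S.Finite := hsfin.image _
    have hScard : S.ncard < k := by
      rw [hS, Set.ncard_image_of_injective _ Subtype.val_injective]
      exact hscard
    have hSW : S ⊆ W := by rintro x ⟨y, -, rfl⟩; exact y.2
    obtain ⟨hcl1, -, -⟩ := hprop S hSW hScard
    -- nonempty
    have hWS : (W \ S).Nonempty := by
      rcases Set.eq_empty_or_nonempty (W \ S) with he | he
      · exfalso
        have hsub : W ⊆ S := by rwa [Set.diff_eq_empty] at he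
        have := Set.ncard_le_ncard hsub hSfin
        omega
      · exact he
    obtain ⟨z, hz⟩ := hWS
    have hzs : (⟨z, hz.1⟩ : ↥W) ∈ sᶜ := fun hc => hz.2 ((hmem _).mp hc)
    have hH : ∀ x y : ↥W, G.Adj ↑x ↑y → ((⊤ : G.Subgraph).induce W).coe.Adj x y := by
      intro x y h
      show ((⊤ : G.Subgraph).induce W).Adj x y
      exact ⟨x.2, y.2, h⟩
    rw [connected_iff]
    refine ⟨?_, ?_⟩
    · -- preconnected
      intro x y
      have haW : (x.1.1 : V) ∈ W \ S := ⟨x.1.2, fun hc => x.2 ((hmem _).mpr hc)⟩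
      have hbW : (y.1.1 : V) ∈ W \ S := ⟨y.1.2, fun hc => y.2 ((hmem _).mpr hc)⟩
      have hcS : (G.induce Sᶜ).Connected := hconn.2 S hSfin hScard
      have hrS : Reach G Sᶜ x.1.1 y.1.1 := reach_of_induce_reachable
        (hcS.preconnected ⟨x.1.1, fun hc => haW.2 hc⟩ ⟨y.1.1, fun hc => hbW.2 hc⟩)
      have hrW : Reach G (W \ S) x.1.1 y.1.1 :=
        hcl1 _ haW _ hbW (by rwa [Set.compl_eq_univ_diff] at hrS)
      exact lift_reach hmem hH hrW x y rfl rfl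
    · exact ⟨⟨⟨z, hz.1⟩, hzs⟩⟩
end Final

/-- Halin's lemma: a rayless `k`-connected countable graph contains, around any finite
vertex set `U`, a finite `k`-connected subgraph. -/
theorem stmt_15 {V : Type} [Countable V] (G : SimpleGraph V) (k : ℕ)
    (hrayless : ¬ HasRay G) (hconn : KConnected G k)
    (U : Set V) (hU : U.Finite) :
    ∃ H : G.Subgraph, H.verts.Finite ∧ U ⊆ H.verts ∧ KConnected H.coe k := by
  exact stmt_15' G k hrayless hconn U hU
end

section
/- Let (T, 𝒱) be a tree-decomposition of a graph G of adhesion at most 2 such that for every edge vw contained in the torso of a part V_t but not in G, there is a v–w path in G with no inner vertices in V_t. Then for every t ∈ V(T), the torso of V_t is a minor of G. -/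
open SimpleGraph

/-- The torso of the part `𝒱 t`: the induced subgraph `G[𝒱 t]` together with additional
edges making every adhesion set contained in `𝒱 t` complete. -/
def torso {V T : Type*} (G : SimpleGraph V) (Tr : SimpleGraph T) (𝒱 : T → Set V)
    (t : T) : SimpleGraph (𝒱 t) :=
  SimpleGraph.fromRel (fun a b =>
    G.Adj a b ∨ ∃ u u' : T, Tr.Adj u u' ∧ 𝒱 u ∩ 𝒱 u' ⊆ 𝒱 t ∧
      (a : V) ∈ 𝒱 u ∩ 𝒱 u' ∧ (b : V) ∈ 𝒱 u ∩ 𝒱 u')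

section Aux

variable {V T : Type} {G : SimpleGraph V} {Tr : SimpleGraph T} {𝒱 : T → Set V}

private lemma side_cover (hc : Tr.Connected) (t₁ t₂ : T) (z : T) :
    (Tr.deleteEdges {s(t₁, t₂)}).Reachable t₁ z ∨ (Tr.deleteEdges {s(t₁, t₂)}).Reachable t₂ z := by
  have key : ∀ {u w : T}, Tr.Walk u w →
      ((Tr.deleteEdges {s(t₁, t₂)}).Reachable t₁ u ∨ (Tr.deleteEdges {s(t₁, t₂)}).Reachable t₂ u) →
      ((Tr.deleteEdges {s(t₁, t₂)}).Reachable t₁ w ∨ (Tr.deleteEdges {s(t₁, t₂)}).Reachable t₂ w) := by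
    intro u w p
    induction p with
    | nil => exact id
    | @cons a b c h q ih =>
      intro hu
      apply ih
      by_cases he : s(a, b) = s(t₁, t₂)
      · rw [Sym2.eq_iff] at he
        rcases he with ⟨rfl, rfl⟩ | ⟨rfl, rfl⟩
        · exact Or.inr (Reachable.refl _)
        · exact Or.inl (Reachable.refl _)
      · have h' : (Tr.deleteEdges {s(t₁, t₂)}).Adj a b := by
          rw [deleteEdges_adj]; exact ⟨h, by simpa using he⟩
        rcases hu with h1 | h1
        · exact Or.inl (h1.trans h'.reachable)
        · exact Or.inr (h1.trans h'.reachable)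
  obtain ⟨p⟩ := hc.preconnected t₁ z
  exact key p (Or.inl (Reachable.refl _))

private lemma side_disj (ht : Tr.IsTree) {t₁ t₂ : T} (ha : Tr.Adj t₁ t₂) :
    ¬ (Tr.deleteEdges {s(t₁, t₂)}).Reachable t₁ t₂ := by
  have hb := (isAcyclic_iff_forall_adj_isBridge.mp ht.IsAcyclic) ha
  rw [isBridge_iff] at hb
  exact hb

private lemma cross_sep (htd : IsTreeDecomp G Tr 𝒱) {t₁ t₂ : T} (ha : Tr.Adj t₁ t₂)
    {z z' : T} (h₁ : (Tr.deleteEdges {s(t₁, t₂)}).Reachable t₁ z)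
    (h₂ : (Tr.deleteEdges {s(t₁, t₂)}).Reachable t₂ z') :
    𝒱 z ∩ 𝒱 z' ⊆ 𝒱 t₁ ∩ 𝒱 t₂ := by
  classical
  obtain ⟨w₁⟩ := h₁.symm
  obtain ⟨w₂⟩ := h₂
  set Tr' := Tr.deleteEdges {s(t₁, t₂)} with hTr'
  let p₁ : Tr'.Path z t₁ := w₁.toPath
  let p₂ : Tr'.Path t₂ z' := w₂.toPath
  have hr₁ : ∀ y ∈ p₁.1.support, Tr'.Reachable t₁ y := by
    intro y hy
    exact ⟨(p₁.1.dropUntil y hy).reverse⟩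
  have hr₂ : ∀ y ∈ p₂.1.support, Tr'.Reachable t₂ y := by
    intro y hy
    exact ⟨p₂.1.takeUntil y hy⟩
  have hsub : ∀ (e : Sym2 T), e ∈ Tr'.edgeSet → e ∈ Tr.edgeSet := by
    intro e he
    exact edgeSet_mono (deleteEdges_le _) he
  let q₁ : Tr.Walk z t₁ := p₁.1.transfer Tr (fun e he => hsub e (p₁.1.edges_subset_edgeSet he))
  let q₂ : Tr.Walk t₂ z' := p₂.1.transfer Tr (fun e he => hsub e (p₂.1.edges_subset_edgeSet he))
  let W : Tr.Walk z z' := q₁.append (Walk.cons ha q₂)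
  have hq₁s : q₁.support = p₁.1.support := Walk.support_transfer _ _
  have hq₂s : q₂.support = p₂.1.support := Walk.support_transfer _ _
  have hWp : W.IsPath := by
    rw [Walk.isPath_def, Walk.support_append, Walk.support_cons, List.tail_cons]
    rw [List.nodup_append]
    refine ⟨by rw [hq₁s]; exact p₁.2.support_nodup, by rw [hq₂s]; exact p₂.2.support_nodup, ?_⟩
    intro y hy₁ y' hy₂ hyy; subst hyy
    rw [hq₁s] at hy₁; rw [hq₂s] at hy₂
    exact side_disj htd.tree ha ((hr₁ y hy₁).trans (hr₂ y hy₂).symm)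
  have ht₁ : t₁ ∈ W.support := by
    rw [Walk.mem_support_append_iff]
    left; rw [hq₁s]; exact Walk.end_mem_support _
  have ht₂ : t₂ ∈ W.support := by
    rw [Walk.mem_support_append_iff]
    right; rw [Walk.support_cons]; exact List.mem_cons_of_mem _ (Walk.start_mem_support q₂)
  exact Set.subset_inter (htd.sep W hWp t₁ ht₁) (htd.sep W hWp t₂ ht₂)

private lemma exists_sideEdge (htd : IsTreeDecomp G Tr 𝒱) {t : T} {x : V} (hx : x ∉ 𝒱 t) :
    ∃ t', Tr.Adj t' t ∧ ∀ z, x ∈ 𝒱 z → (Tr.deleteEdges {s(t', t)}).Reachable t' z := by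
  classical
  obtain ⟨z₀, hz₀⟩ := htd.coverV x
  have hz₀t : z₀ ≠ t := fun h => hx (h ▸ hz₀)
  obtain ⟨w⟩ := htd.tree.isConnected.preconnected z₀ t
  set p : Tr.Path z₀ t := w.toPath with hp
  obtain ⟨t', h', q, hq⟩ := Walk.exists_eq_cons_of_ne (Ne.symm hz₀t) p.1.reverse
  have hrev : p.1.reverse.IsPath := p.2.reverse
  rw [hq, Walk.cons_isPath_iff] at hrev
  refine ⟨t', h'.symm, ?_⟩
  intro z hz
  obtain ⟨w'⟩ := htd.tree.isConnected.preconnected z z₀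
  set r : Tr.Path z z₀ := w'.toPath with hr
  have hts : t ∉ r.1.support := fun hmem => hx (htd.sep r.1 r.2 t hmem ⟨hz, hz₀⟩)
  let W : Tr.Walk z t' := r.1.append q.reverse
  have hWt : t ∉ W.support := by
    intro hmem
    rw [Walk.mem_support_append_iff] at hmem
    rcases hmem with hmem | hmem
    · exact hts hmem
    · rw [Walk.support_reverse, List.mem_reverse] at hmem
      exact hrev.2 hmem
  have hdel : ∀ e ∈ W.edges, e ∉ ({s(t', t)} : Set (Sym2 T)) := by
    intro e he hmem
    rw [Set.mem_singleton_iff] at hmem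
    subst hmem
    exact hWt (W.snd_mem_support_of_mem_edges he)
  exact (Reachable.symm ⟨W.toDeleteEdges _ hdel⟩)

private lemma att_mem (htd : IsTreeDecomp G Tr 𝒱) {t t' : T} (ha' : Tr.Adj t' t) {x a : V}
    (hxR : ∀ z, x ∈ 𝒱 z → (Tr.deleteEdges {s(t', t)}).Reachable t' z)
    (haV : a ∈ 𝒱 t) (W : G.Walk x a)
    (hW : ∀ y ∈ W.support, y ≠ a → y ∉ 𝒱 t) :
    a ∈ 𝒱 t' ∩ 𝒱 t := by
  classical
  revert haV hxR hW
  induction W with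
  | nil =>
    intro hxR haV hW
    exact absurd (hxR t haV) (side_disj htd.tree ha')
  | @cons u v w h q ih =>
    intro hxR haV hW
    by_cases hy : ∀ z', v ∈ 𝒱 z' → (Tr.deleteEdges {s(t', t)}).Reachable t' z'
    · refine ih hy haV ?_
      intro y hyq hne
      exact hW y (by rw [Walk.support_cons]; exact List.mem_cons_of_mem _ hyq) hne
    · push_neg at hy
      obtain ⟨z', hvz', hnr⟩ := hy
      have hz'R : (Tr.deleteEdges {s(t', t)}).Reachable t z' := by
        rcases side_cover htd.tree.isConnected t' t z' with h1 | h1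
        · exact absurd h1 hnr
        · exact h1
      obtain ⟨z, huz, hvz⟩ := htd.coverE h
      have hvt : v ∈ 𝒱 t' ∩ 𝒱 t :=
        cross_sep htd ha' (hxR z huz) hz'R ⟨hvz, hvz'⟩
      have hva : v = w := by
        by_contra hne
        exact hW v (by rw [Walk.support_cons]; exact List.mem_cons_of_mem _ q.start_mem_support) hne hvt.2
      exact hva ▸ hvt

private lemma pair_mem (htd : IsTreeDecomp G Tr 𝒱)
    (hadh : ∀ ⦃u u' : T⦄, Tr.Adj u u' → (𝒱 u ∩ 𝒱 u').Finite ∧ (𝒱 u ∩ 𝒱 u').ncard ≤ 2)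
    {t : T} {x a b c : V}
    (hx : x ∉ 𝒱 t) (haV : a ∈ 𝒱 t) (hbV : b ∈ 𝒱 t) (hcV : c ∈ 𝒱 t) (hab : a ≠ b)
    (Wa : G.Walk x a) (hWa : ∀ y ∈ Wa.support, y ≠ a → y ∉ 𝒱 t)
    (Wb : G.Walk x b) (hWb : ∀ y ∈ Wb.support, y ≠ b → y ∉ 𝒱 t)
    (Wc : G.Walk x c) (hWc : ∀ y ∈ Wc.support, y ≠ c → y ∉ 𝒱 t) :
    c = a ∨ c = b := by
  obtain ⟨t', ha', hside⟩ := exists_sideEdge htd hx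
  have hA := att_mem htd ha' hside haV Wa hWa
  have hB := att_mem htd ha' hside hbV Wb hWb
  have hC := att_mem htd ha' hside hcV Wc hWc
  obtain ⟨hfin, hcard⟩ := hadh ha'
  have hsub : ({a, b} : Set V) ⊆ 𝒱 t' ∩ 𝒱 t := by
    rintro y (rfl | rfl)
    · exact hA
    · exact hB
  have heq : ({a, b} : Set V) = 𝒱 t' ∩ 𝒱 t :=
    Set.eq_of_subset_of_ncard_le hsub (by rw [Set.ncard_pair hab]; exact hcard) hfin
  rw [← heq] at hC
  simpa using hC

private lemma not_mem_takeUntil [DecidableEq V] {a b v : V} {p : G.Walk a b} (hp : p.IsPath)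
    (hv : v ∈ p.support) (hne : v ≠ b) : b ∉ (p.takeUntil v hv).support := by
  intro hb
  have hspec := p.take_spec hv
  have hnd : p.support.Nodup := hp.support_nodup
  rw [← hspec, Walk.support_append, List.nodup_append] at hnd
  have hbd : b ∈ (p.dropUntil v hv).support := Walk.end_mem_support _
  rw [Walk.support_eq_cons, List.mem_cons] at hbd
  rcases hbd with hbd | hbd
  · exact hne hbd.symm
  · exact hnd.2.2 _ hb _ hbd rfl

private lemma not_mem_dropUntil [DecidableEq V] {a b v : V} {p : G.Walk a b} (hp : p.IsPath)
    (hv : v ∈ p.support) (hne : v ≠ a) : a ∉ (p.dropUntil v hv).support := by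
  intro hb
  have hspec := p.take_spec hv
  have hnd : p.support.Nodup := hp.support_nodup
  rw [← hspec, Walk.support_append, List.nodup_append] at hnd
  rw [Walk.support_eq_cons, List.mem_cons] at hb
  rcases hb with hb | hb
  · exact hne hb.symm
  · exact hnd.2.2 _ (Walk.start_mem_support _) _ hb rfl

private lemma reach_induce {s : Set V} : ∀ {u v : V} (p : G.Walk u v)
    (_ : ∀ w ∈ p.support, w ∈ s) (hu : u ∈ s) (hv : v ∈ s),
    (G.induce s).Reachable ⟨u, hu⟩ ⟨v, hv⟩ := by
  intro u v p
  induction p with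
  | nil => intro h hu hv; rfl
  | @cons x y z hadj q ih =>
    intro h hu hv
    have hy : y ∈ s := h y (by rw [Walk.support_cons]; exact List.mem_cons_of_mem _ q.start_mem_support)
    have h1 : (G.induce s).Adj ⟨x, hu⟩ ⟨y, hy⟩ := by
      simp only [comap_adj, Function.Embedding.coe_subtype]
      exact hadj
    exact h1.reachable.trans (ih (fun w hw => h w (by rw [Walk.support_cons]; exact List.mem_cons_of_mem _ hw)) hy hv)

end Aux

/-- If `(T, 𝒱)` is a tree-decomposition of `G` of adhesion at most 2 such that every
torso edge `vw` missing from `G` is realised by a `v`–`w` path in `G` with no inner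
vertex in `𝒱 t`, then every torso is a minor of `G`. -/
theorem stmt_19 {V T : Type} (G : SimpleGraph V) (Tr : SimpleGraph T) (𝒱 : T → Set V)
    (htd : IsTreeDecomp G Tr 𝒱)
    (hadh : ∀ ⦃u u' : T⦄, Tr.Adj u u' →
      (𝒱 u ∩ 𝒱 u').Finite ∧ (𝒱 u ∩ 𝒱 u').ncard ≤ 2)
    (hpaths : ∀ (t : T) (a b : 𝒱 t), (torso G Tr 𝒱 t).Adj a b → ¬ G.Adj a b →
      ∃ p : G.Walk (a : V) (b : V), p.IsPath ∧
        ∀ v ∈ p.support, v ≠ (a : V) → v ≠ (b : V) → v ∉ 𝒱 t) :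
    ∀ t : T, IsMinorOf (torso G Tr 𝒱 t) G := by
  classical
  intro t
  choose P hP using hpaths t
  obtain ⟨I, hI⟩ : ∃ I : 𝒱 t → 𝒱 t → Set V, ∀ a b : 𝒱 t, I a b =
      if h : ((torso G Tr 𝒱 t).Adj a b ∧ ¬ G.Adj (a : V) (b : V)) ∧
          WellOrderingRel (a : V) (b : V)
      then {v | v ∈ (P a b h.1.1 h.1.2).support ∧ v ≠ (a : V) ∧ v ≠ (b : V)} else ∅ :=
    ⟨_, fun a b => rfl⟩
  -- basic facts about `I`
  have hIprops : ∀ (a b : 𝒱 t) (v : V), v ∈ I a b →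
      ∃ (h1 : (torso G Tr 𝒱 t).Adj a b) (h2 : ¬ G.Adj (a : V) (b : V)),
        WellOrderingRel (a : V) (b : V) ∧
        v ∈ (P a b h1 h2).support ∧ v ≠ (a : V) ∧ v ≠ (b : V) := by
    intro a b v hv
    rw [hI] at hv
    split_ifs at hv with h
    · exact ⟨h.1.1, h.1.2, h.2, hv⟩
    · exact absurd hv (Set.notMem_empty v)
  have hInotV : ∀ (a b : 𝒱 t) (v : V), v ∈ I a b → v ∉ 𝒱 t := by
    intro a b v hv
    obtain ⟨h1, h2, _, hsup, hna, hnb⟩ := hIprops a b v hv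
    exact (hP a b h1 h2).2 v hsup hna hnb
  set B : 𝒱 t → Set V := fun a => {(a : V)} ∪ ⋃ b, I a b with hB
  have hmem : ∀ a : 𝒱 t, (a : V) ∈ B a := fun a => Set.mem_union_left _ rfl
  refine ⟨B, fun a => ⟨a, hmem a⟩, ?_, ?_, ?_⟩
  · -- connectivity
    intro a
    rw [connected_iff_exists_forall_reachable]
    refine ⟨⟨a, hmem a⟩, ?_⟩
    rintro ⟨v, hv⟩
    rcases hv with hv | hv
    · rw [Set.mem_singleton_iff] at hv
      subst hv
      exact Reachable.refl _
    · rw [Set.mem_iUnion] at hv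
      obtain ⟨b, hvb⟩ := hv
      obtain ⟨h1, h2, hwor, hsup, hna, hnb⟩ := hIprops a b v hvb
      have hpath := (hP a b h1 h2).1
      have hsupB : ∀ y ∈ ((P a b h1 h2).takeUntil v hsup).support, y ∈ B a := by
        intro y hy
        have hyp : y ∈ (P a b h1 h2).support := Walk.support_takeUntil_subset _ hsup hy
        have hynb : y ≠ (b : V) := by
          rintro rfl
          exact not_mem_takeUntil hpath hsup hnb hy
        by_cases hya : y = (a : V)
        · exact hya ▸ hmem a
        · refine Set.mem_union_right _ ?_
          rw [Set.mem_iUnion]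
          refine ⟨b, ?_⟩
          rw [hI]
          rw [dif_pos ⟨⟨h1, h2⟩, hwor⟩]
          exact ⟨hyp, hya, hynb⟩
      exact reach_induce _ hsupB (hmem a) (Set.mem_union_right _
        (Set.mem_iUnion.mpr ⟨b, hvb⟩))
  · -- pairwise disjoint
    intro a a' hne
    rw [Set.disjoint_left]
    intro v hv hv'
    have hcne : (a : V) ≠ (a' : V) := fun h => hne (Subtype.ext h)
    rcases hv with hv | hv <;> rcases hv' with hv' | hv'
    · rw [Set.mem_singleton_iff] at hv hv'
      exact hcne (hv ▸ hv' ▸ rfl)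
    · rw [Set.mem_singleton_iff] at hv
      rw [Set.mem_iUnion] at hv'
      obtain ⟨b', hvb'⟩ := hv'
      exact hInotV a' b' v hvb' (hv ▸ a.2)
    · rw [Set.mem_singleton_iff] at hv'
      rw [Set.mem_iUnion] at hv
      obtain ⟨b, hvb⟩ := hv
      exact hInotV a b v hvb (hv' ▸ a'.2)
    · rw [Set.mem_iUnion] at hv hv'
      obtain ⟨b, hvb⟩ := hv
      obtain ⟨b', hvb'⟩ := hv'
      obtain ⟨h1, h2, hwor, hsup, hna, hnb⟩ := hIprops a b v hvb
      obtain ⟨h1', h2', hwor', hsup', hna', hnb'⟩ := hIprops a' b' v hvb'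
      have hxV : v ∉ 𝒱 t := hInotV a b v hvb
      have habV : (a : V) ≠ (b : V) := fun h => h1.ne (Subtype.ext h)
      have habV' : (a' : V) ≠ (b' : V) := fun h => h1'.ne (Subtype.ext h)
      -- walks from v to a, b, a', b'
      have mkWalks : ∀ (c d : 𝒱 t) (hc1 : (torso G Tr 𝒱 t).Adj c d)
          (hc2 : ¬ G.Adj (c : V) (d : V)) (hs : v ∈ (P c d hc1 hc2).support)
          (hvc : v ≠ (c : V)) (hvd : v ≠ (d : V)),
          (∃ W : G.Walk v (c : V), ∀ y ∈ W.support, y ≠ (c : V) → y ∉ 𝒱 t) ∧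
          (∃ W : G.Walk v (d : V), ∀ y ∈ W.support, y ≠ (d : V) → y ∉ 𝒱 t) := by
        intro c d hc1 hc2 hs hvc hvd
        have hpath := (hP c d hc1 hc2).1
        have hint := (hP c d hc1 hc2).2
        constructor
        · refine ⟨((P c d hc1 hc2).takeUntil v hs).reverse, ?_⟩
          intro y hy hyc
          rw [Walk.support_reverse, List.mem_reverse] at hy
          have hyd : y ≠ (d : V) := by
            rintro rfl
            exact not_mem_takeUntil hpath hs hvd hy
          exact hint y (Walk.support_takeUntil_subset _ hs hy) hyc hyd
        · refine ⟨(P c d hc1 hc2).dropUntil v hs, ?_⟩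
          intro y hy hyd
          have hyc : y ≠ (c : V) := by
            rintro rfl
            exact not_mem_dropUntil hpath hs hvc hy
          exact hint y (Walk.support_dropUntil_subset _ hs hy) hyc hyd
      obtain ⟨⟨Wa, hWa⟩, ⟨Wb, hWb⟩⟩ := mkWalks a b h1 h2 hsup hna hnb
      obtain ⟨⟨Wa', hWa'⟩, ⟨Wb', hWb'⟩⟩ := mkWalks a' b' h1' h2' hsup' hna' hnb'
      have hca' : (a' : V) = (a : V) ∨ (a' : V) = (b : V) :=
        pair_mem htd hadh hxV a.2 b.2 a'.2 habV Wa hWa Wb hWb Wa' hWa'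
      have hcb' : (b' : V) = (a : V) ∨ (b' : V) = (b : V) :=
        pair_mem htd hadh hxV a.2 b.2 b'.2 habV Wa hWa Wb hWb Wb' hWb'
      rcases hca' with hca' | hca'
      · exact hcne hca'.symm
      · rcases hcb' with hcb' | hcb'
        · -- a' = b, b' = a : contradiction with well-ordering
          rw [hca', hcb'] at hwor'
          exact absurd (IsTrans.trans _ _ _ hwor hwor') (irrefl _)
        · exact habV' (hca'.trans hcb'.symm)
  · -- adjacency
    intro a b hab
    by_cases hG : G.Adj (a : V) (b : V)
    · exact ⟨a, hmem a, b, hmem b, hG⟩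
    · have hneV : (a : V) ≠ (b : V) := fun h => hab.ne (Subtype.ext h)
      have key : ∀ (c d : 𝒱 t) (hc1 : (torso G Tr 𝒱 t).Adj c d)
          (hc2 : ¬ G.Adj (c : V) (d : V)) (hw : WellOrderingRel (c : V) (d : V)),
          ∃ y, y ∈ I c d ∧ G.Adj y (d : V) := by
        intro c d hc1 hc2 hw
        have hcd : (c : V) ≠ (d : V) := fun h => hc1.ne (Subtype.ext h)
        have hpath := (hP c d hc1 hc2).1
        obtain ⟨y, hadj, q, heq⟩ :=
          Walk.exists_eq_cons_of_ne (Ne.symm hcd) (P c d hc1 hc2).reverse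
        have hrp : (P c d hc1 hc2).reverse.IsPath := hpath.reverse
        rw [heq, Walk.cons_isPath_iff] at hrp
        have hysup : y ∈ (P c d hc1 hc2).support := by
          have : y ∈ (P c d hc1 hc2).reverse.support := by
            rw [heq, Walk.support_cons]
            exact List.mem_cons_of_mem _ q.start_mem_support
          rwa [Walk.support_reverse, List.mem_reverse] at this
        have hynd : y ≠ (d : V) := by
          rintro rfl
          exact hrp.2 q.start_mem_support
        have hync : y ≠ (c : V) := by
          rintro rfl
          exact hc2 hadj.symm
        refine ⟨y, ?_, hadj.symm⟩
        rw [hI, dif_pos ⟨⟨hc1, hc2⟩, hw⟩]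
        exact ⟨hysup, hync, hynd⟩
      rcases @trichotomous V WellOrderingRel _ (a : V) (b : V) with hw | hw | hw
      · obtain ⟨y, hyI, hyadj⟩ := key a b hab hG hw
        exact ⟨y, Set.mem_union_right _ (Set.mem_iUnion.mpr ⟨b, hyI⟩), b, hmem b, hyadj⟩
      · exact absurd hw hneV
      · obtain ⟨y, hyI, hyadj⟩ := key b a hab.symm (fun h => hG h.symm) hw
        exact ⟨a, hmem a, y, Set.mem_union_right _ (Set.mem_iUnion.mpr ⟨a, hyI⟩), hyadj.symm⟩
end
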